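/- arXiv:1110.6543 — 13 statements merged into one kernel-verified Lean document; each statement's English description precedes it below -/
import Mathlib

section
/- Let A and B be closed densely defined linear operators in a complex Hilbert space H, and let D be a dense linear subspace of H such that: (D.1) D ⊆ D(AB) ∩ D(BA); (D.2) ABξ − BAξ = ξ for every ξ ∈ D; (D.3) D ⊆ D(A*) ∩ D(B*). Set S = A↾D, T = B↾D, S† = A*↾D, T† = B*↾D. If either A*η ∈ D(T*) for every η ∈ D, or B*η ∈ D(S*) for every η ∈ D, then both weak products S□T and T□S are well-defined (i.e. Tξ ∈ D((S†)*), Sξ ∈ D((T†)*), S†η ∈ D(T*), T†η ∈ D(S*) for all ξ, η ∈ D) and (S†)*(Tξ) − (T†)*(Sξ) = ξ for every ξ ∈ D. -/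
/- STATEMENT 1: Let A, B be closed densely defined operators in H and D a dense subspace
with (D.1) D ⊆ D(AB) ∩ D(BA), (D.2) ABξ − BAξ = ξ on D, (D.3) D ⊆ D(A*) ∩ D(B*).
Set S = A↾D, T = B↾D, S† = A*↾D, T† = B*↾D. If either A*η ∈ D(T*) for every η ∈ D or
B*η ∈ D(S*) for every η ∈ D, then both weak products S□T and T□S are well-defined and
(S†)*(Tξ) − (T†)*(Sξ) = ξ for every ξ ∈ D. -/
theorem weak_products_well_defined_of_restrictions
    {H : Type*} [NormedAddCommGroup H] [InnerProductSpace ℂ H] [CompleteSpace H]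
    (dA dB D : Submodule ℂ H)
    (A : dA →ₗ[ℂ] H) (B : dB →ₗ[ℂ] H)
    (hdA : Dense (dA : Set H)) (hdB : Dense (dB : Set H)) (hD : Dense (D : Set H))
    -- A and B are closed operators
    (hAclosed : IsClosed {p : H × H | ∃ ξ : dA, (ξ : H) = p.1 ∧ A ξ = p.2})
    (hBclosed : IsClosed {p : H × H | ∃ ξ : dB, (ξ : H) = p.1 ∧ B ξ = p.2})
    (hDA : D ≤ dA) (hDB : D ≤ dB)
    -- (D.1): D ⊆ D(AB) ∩ D(BA)
    (hD1a : ∀ ξ : D, B ⟨(ξ : H), hDB ξ.2⟩ ∈ dA)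
    (hD1b : ∀ ξ : D, A ⟨(ξ : H), hDA ξ.2⟩ ∈ dB)
    -- (D.2): ABξ − BAξ = ξ for every ξ ∈ D
    (hD2 : ∀ ξ : D,
      A ⟨B ⟨(ξ : H), hDB ξ.2⟩, hD1a ξ⟩ - B ⟨A ⟨(ξ : H), hDA ξ.2⟩, hD1b ξ⟩ = (ξ : H))
    -- (D.3): D ⊆ D(A*) ∩ D(B*); Astar = A*↾D = S†, Bstar = B*↾D = T†
    (Astar Bstar : D → H)
    (hD3a : ∀ (η : D) (ξ : dA), (inner ℂ (A ξ) (η : H) : ℂ) = inner ℂ (ξ : H) (Astar η))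
    (hD3b : ∀ (η : D) (ξ : dB), (inner ℂ (B ξ) (η : H) : ℂ) = inner ℂ (ξ : H) (Bstar η))
    -- S = A↾D and T = B↾D
    (S T : D → H)
    (hSdef : ∀ ξ : D, S ξ = A ⟨(ξ : H), hDA ξ.2⟩)
    (hTdef : ∀ ξ : D, T ξ = B ⟨(ξ : H), hDB ξ.2⟩)
    -- either A*η ∈ D(T*) for every η ∈ D, or B*η ∈ D(S*) for every η ∈ D
    (hyp : (∀ η : D, ∃ u : H, ∀ ξ : D, (inner ℂ (T ξ) (Astar η) : ℂ) = inner ℂ (ξ : H) u) ∨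
           (∀ η : D, ∃ u : H, ∀ ξ : D, (inner ℂ (S ξ) (Bstar η) : ℂ) = inner ℂ (ξ : H) u)) :
    -- Tξ ∈ D((S†)*) for every ξ ∈ D
    (∀ ξ : D, ∃ v : H, ∀ η : D, (inner ℂ (Astar η) (T ξ) : ℂ) = inner ℂ (η : H) v) ∧
    -- Sξ ∈ D((T†)*) for every ξ ∈ D
    (∀ ξ : D, ∃ w : H, ∀ η : D, (inner ℂ (Bstar η) (S ξ) : ℂ) = inner ℂ (η : H) w) ∧
    -- S†η ∈ D(T*) for every η ∈ D
    (∀ η : D, ∃ u : H, ∀ ξ : D, (inner ℂ (T ξ) (Astar η) : ℂ) = inner ℂ (ξ : H) u) ∧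
    -- T†η ∈ D(S*) for every η ∈ D
    (∀ η : D, ∃ u : H, ∀ ξ : D, (inner ℂ (S ξ) (Bstar η) : ℂ) = inner ℂ (ξ : H) u) ∧
    -- (S†)*(Tξ) − (T†)*(Sξ) = ξ for every ξ ∈ D
    (∀ ξ : D, ∀ v w : H,
      (∀ η : D, (inner ℂ (Astar η) (T ξ) : ℂ) = inner ℂ (η : H) v) →
      (∀ η : D, (inner ℂ (Bstar η) (S ξ) : ℂ) = inner ℂ (η : H) w) →
      v - w = (ξ : H)) := by

  -- abbreviations for ABξ and BAξ
  have keyA : ∀ ξ η : D, (inner ℂ (T ξ) (Astar η) : ℂ) =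
      inner ℂ (A ⟨B ⟨(ξ : H), hDB ξ.2⟩, hD1a ξ⟩) (η : H) := by
    intro ξ η
    rw [hTdef]
    exact (hD3a η ⟨B ⟨(ξ : H), hDB ξ.2⟩, hD1a ξ⟩).symm
  have keyB : ∀ ξ η : D, (inner ℂ (S ξ) (Bstar η) : ℂ) =
      inner ℂ (B ⟨A ⟨(ξ : H), hDA ξ.2⟩, hD1b ξ⟩) (η : H) := by
    intro ξ η
    rw [hSdef]
    exact (hD3b η ⟨A ⟨(ξ : H), hDA ξ.2⟩, hD1b ξ⟩).symm
  have keyA' : ∀ ξ η : D, (inner ℂ (Astar η) (T ξ) : ℂ) =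
      inner ℂ (η : H) (A ⟨B ⟨(ξ : H), hDB ξ.2⟩, hD1a ξ⟩) := by
    intro ξ η
    have h := congrArg (starRingEnd ℂ) (keyA ξ η)
    simpa [inner_conj_symm] using h
  have keyB' : ∀ ξ η : D, (inner ℂ (Bstar η) (S ξ) : ℂ) =
      inner ℂ (η : H) (B ⟨A ⟨(ξ : H), hDA ξ.2⟩, hD1b ξ⟩) := by
    intro ξ η
    have h := congrArg (starRingEnd ℂ) (keyB ξ η)
    simpa [inner_conj_symm] using h
  -- the commutation relation in weak form: ⟨Tξ, A*η⟩ − ⟨Sξ, B*η⟩ = ⟨ξ, η⟩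
  have comm : ∀ ξ η : D, (inner ℂ (T ξ) (Astar η) : ℂ) - inner ℂ (S ξ) (Bstar η)
      = inner ℂ (ξ : H) (η : H) := by
    intro ξ η
    rw [keyA, keyB, ← inner_sub_left, hD2]
  refine ⟨?_, ?_, ?_, ?_, ?_⟩
  · intro ξ
    exact ⟨A ⟨B ⟨(ξ : H), hDB ξ.2⟩, hD1a ξ⟩, fun η => keyA' ξ η⟩
  · intro ξ
    exact ⟨B ⟨A ⟨(ξ : H), hDA ξ.2⟩, hD1b ξ⟩, fun η => keyB' ξ η⟩
  · rcases hyp with h | h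
    · exact h
    · intro η
      obtain ⟨u, hu⟩ := h η
      refine ⟨u + (η : H), fun ξ => ?_⟩
      have := comm ξ η
      rw [hu ξ] at this
      rw [inner_add_right, ← this]
      ring
  · rcases hyp with h | h
    · intro η
      obtain ⟨u, hu⟩ := h η
      refine ⟨u - (η : H), fun ξ => ?_⟩
      have := comm ξ η
      rw [hu ξ] at this
      rw [inner_sub_right, ← this]
      ring
    · exact h
  · intro ξ v w hv hw
    have hv' : v = A ⟨B ⟨(ξ : H), hDB ξ.2⟩, hD1a ξ⟩ :=
      hD.eq_of_inner_right ℂ fun x hx => ((hv ⟨x, hx⟩).symm.trans (keyA' ξ ⟨x, hx⟩))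
    have hw' : w = B ⟨A ⟨(ξ : H), hDA ξ.2⟩, hD1b ξ⟩ :=
      hD.eq_of_inner_right ℂ fun x hx => ((hw ⟨x, hx⟩).symm.trans (keyB' ξ ⟨x, hx⟩))
    rw [hv', hw', hD2]
end

section
/- Let V_S and V_T be weakly continuous semigroups of bounded operators on H satisfying the generalized Weyl commutation relation V_S(α)V_T(β) = e^{αβ} V_T(β)V_S(α) for all α, β ≥ 0. Let T ∈ L†(D,H) and assume that T is obtained as the weak derivative of V_T at 0 on D in the following sense: for every ξ ∈ D and u ∈ H, lim_{β→0⁺} ⟨(V_T(β)ξ − ξ)/β, u⟩ = ⟨Tξ, u⟩, and for every η ∈ D and u ∈ H, lim_{β→0⁺} ⟨(V_T(β)*η − η)/β, u⟩ = ⟨T†η, u⟩. Then for all ξ, η ∈ D and all α ≥ 0: ⟨V_S(α)Tξ, η⟩ − ⟨V_S(α)ξ, T†η⟩ = α⟨V_S(α)ξ, η⟩. -/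
open Filter Topology

/- STATEMENT 2: If V_S, V_T are weakly continuous semigroups of bounded operators on H
satisfying the generalized Weyl relation V_S(α)V_T(β) = e^{αβ}V_T(β)V_S(α) (α,β ≥ 0),
and T ∈ L†(D,H) is the weak derivative of V_T at 0 on D, then for all ξ, η ∈ D, α ≥ 0:
⟨V_S(α)Tξ, η⟩ − ⟨V_S(α)ξ, T†η⟩ = α⟨V_S(α)ξ, η⟩. -/
theorem weyl_relation_implies_quasi_strong
    {H : Type*} [NormedAddCommGroup H] [InnerProductSpace ℂ H] [CompleteSpace H]
    (D : Submodule ℂ H) (hD : Dense (D : Set H))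
    (T Td : D →ₗ[ℂ] H)
    (hT : ∀ ξ η : D, (inner ℂ (T ξ) (η : H) : ℂ) = inner ℂ (ξ : H) (Td η))
    (VS VT : ℝ → (H →L[ℂ] H))
    -- V_S is a weakly continuous semigroup
    (hVS0 : VS 0 = 1)
    (hVSsem : ∀ s t : ℝ, 0 ≤ s → 0 ≤ t → VS (s + t) = (VS s) ∘L (VS t))
    (hVSw : ∀ x y : H, ContinuousOn (fun t : ℝ => (inner ℂ (VS t x) y : ℂ)) (Set.Ici 0))
    -- V_T is a weakly continuous semigroup
    (hVT0 : VT 0 = 1)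
    (hVTsem : ∀ s t : ℝ, 0 ≤ s → 0 ≤ t → VT (s + t) = (VT s) ∘L VT t)
    (hVTw : ∀ x y : H, ContinuousOn (fun t : ℝ => (inner ℂ (VT t x) y : ℂ)) (Set.Ici 0))
    -- generalized Weyl commutation relation
    (hWeyl : ∀ α β : ℝ, 0 ≤ α → 0 ≤ β →
      (VS α) ∘L (VT β) = (Real.exp (α * β) : ℂ) • ((VT β) ∘L (VS α)))
    -- T is the weak derivative of V_T at 0 on D
    (hTgen : ∀ (ξ : D) (u : H),
      Tendsto (fun β : ℝ => (inner ℂ (((β : ℂ))⁻¹ • (VT β (ξ : H) - (ξ : H))) u : ℂ))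
        (𝓝[>] (0 : ℝ)) (𝓝 ((inner ℂ (T ξ) u : ℂ))))
    -- T† is the weak derivative of V_T(·)* at 0 on D
    (hTdgen : ∀ (η : D) (u : H),
      Tendsto (fun β : ℝ =>
          (inner ℂ (((β : ℂ))⁻¹ • (ContinuousLinearMap.adjoint (VT β) (η : H) - (η : H))) u : ℂ))
        (𝓝[>] (0 : ℝ)) (𝓝 ((inner ℂ (Td η) u : ℂ)))) :
    ∀ (ξ η : D) (α : ℝ), 0 ≤ α →
      (inner ℂ (VS α (T ξ)) (η : H) : ℂ) - (inner ℂ (VS α (ξ : H)) (Td η) : ℂ)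
        = (α : ℂ) * (inner ℂ (VS α (ξ : H)) (η : H) : ℂ) := by
  intro ξ η α hα
  set A := VS α with hA
  -- limit of the left-hand side function
  have h1 : Tendsto (fun β : ℝ =>
      (inner ℂ (((β : ℂ))⁻¹ • (VT β (ξ : H) - (ξ : H))) (ContinuousLinearMap.adjoint A (η : H)) : ℂ))
      (𝓝[>] (0 : ℝ)) (𝓝 (inner ℂ (T ξ) (ContinuousLinearMap.adjoint A (η : H)))) :=
    hTgen ξ _
  -- conjugated adjoint limit
  have hconj : Tendsto (fun β : ℝ =>
      (starRingEnd ℂ) (inner ℂ (((β : ℂ))⁻¹ • (ContinuousLinearMap.adjoint (VT β) (η : H) - (η : H))) (A (ξ : H)) : ℂ))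
      (𝓝[>] (0 : ℝ)) (𝓝 ((starRingEnd ℂ) (inner ℂ (Td η) (A (ξ : H))))) :=
    (Complex.continuous_conj.tendsto _).comp (hTdgen η (A (ξ : H)))
  -- exp(αβ) → 1
  have hexp : Tendsto (fun β : ℝ => ((Real.exp (α * β) : ℝ) : ℂ)) (𝓝[>] (0 : ℝ)) (𝓝 1) := by
    have hc : Continuous (fun β : ℝ => ((Real.exp (α * β) : ℝ) : ℂ)) := by
      exact Complex.continuous_ofReal.comp (Real.continuous_exp.comp (continuous_const.mul continuous_id))
    have h0 := (hc.tendsto 0).mono_left (nhdsWithin_le_nhds (s := Set.Ioi (0:ℝ)))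
    simpa using h0
  -- (exp(αβ) - 1)/β → α
  have hslope : Tendsto (fun β : ℝ => (((Real.exp (α * β) : ℝ) : ℂ) - 1) / (β : ℂ))
      (𝓝[>] (0 : ℝ)) (𝓝 (α : ℂ)) := by
    have hd : HasDerivAt (fun β : ℝ => Real.exp (α * β)) α 0 := by
      have h1 : HasDerivAt (fun β : ℝ => α * β) α 0 := by
        simpa using (hasDerivAt_id (0 : ℝ)).const_mul α
      simpa [Function.comp_def] using (Real.hasDerivAt_exp (α * 0)).comp 0 h1
    have hs := hasDerivAt_iff_tendsto_slope.mp hd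
    have hs' : Tendsto (slope (fun β : ℝ => Real.exp (α * β)) 0) (𝓝[>] (0 : ℝ)) (𝓝 α) :=
      hs.mono_left (nhdsWithin_mono _ (fun x hx => ne_of_gt hx))
    have := (Complex.continuous_ofReal.tendsto _).comp hs'
    refine this.congr' ?_
    filter_upwards [self_mem_nhdsWithin] with β hβ
    have hβ0 : (β : ℝ) ≠ 0 := ne_of_gt hβ
    simp [slope, Function.comp]
    push_cast
    field_simp
  -- limit of the right-hand side function
  have h2 : Tendsto (fun β : ℝ =>
      ((Real.exp (α * β) : ℝ) : ℂ) *
        (starRingEnd ℂ) (inner ℂ (((β : ℂ))⁻¹ • (ContinuousLinearMap.adjoint (VT β) (η : H) - (η : H))) (A (ξ : H)) : ℂ)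
      + ((((Real.exp (α * β) : ℝ) : ℂ) - 1) / (β : ℂ)) * (inner ℂ (A (ξ : H)) (η : H) : ℂ))
      (𝓝[>] (0 : ℝ))
      (𝓝 (1 * (starRingEnd ℂ) (inner ℂ (Td η) (A (ξ : H))) + (α : ℂ) * inner ℂ (A (ξ : H)) (η : H))) :=
    (hexp.mul hconj).add (hslope.mul tendsto_const_nhds)
  -- the two functions agree on (0, ∞)
  have heq : ∀ᶠ β : ℝ in 𝓝[>] (0 : ℝ),
      (inner ℂ (((β : ℂ))⁻¹ • (VT β (ξ : H) - (ξ : H))) (ContinuousLinearMap.adjoint A (η : H)) : ℂ)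
      = ((Real.exp (α * β) : ℝ) : ℂ) *
        (starRingEnd ℂ) (inner ℂ (((β : ℂ))⁻¹ • (ContinuousLinearMap.adjoint (VT β) (η : H) - (η : H))) (A (ξ : H)) : ℂ)
      + ((((Real.exp (α * β) : ℝ) : ℂ) - 1) / (β : ℂ)) * (inner ℂ (A (ξ : H)) (η : H) : ℂ) := by
    filter_upwards [self_mem_nhdsWithin] with β hβ
    have hβ0 : ((β : ℂ)) ≠ 0 := by exact_mod_cast ne_of_gt hβ
    have hcomm : A (VT β (ξ : H)) = ((Real.exp (α * β) : ℝ) : ℂ) • VT β (A (ξ : H)) := by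
      have := congrArg (fun f : H →L[ℂ] H => f (ξ : H)) (hWeyl α β hα hβ.le)
      simpa using this
    rw [inner_smul_left, inner_sub_left, map_inv₀, Complex.conj_ofReal,
      ContinuousLinearMap.adjoint_inner_right, ContinuousLinearMap.adjoint_inner_right,
      hcomm, inner_smul_left, Complex.conj_ofReal,
      ← ContinuousLinearMap.adjoint_inner_right (VT β)]
    rw [inner_smul_left, map_inv₀, Complex.conj_ofReal, inner_sub_left, map_mul, map_sub,
      inner_conj_symm, inner_conj_symm, map_inv₀, Complex.conj_ofReal]
    field_simp
    ring
  have key := tendsto_nhds_unique (h1.congr' heq) h2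
  have hfin : (inner ℂ (A (T ξ)) (η : H) : ℂ)
      = inner ℂ (A (ξ : H)) (Td η) + (α : ℂ) * inner ℂ (A (ξ : H)) (η : H) := by
    rw [← ContinuousLinearMap.adjoint_inner_right A, key, inner_conj_symm]
    ring
  rw [hfin]; ring
end

section
/- Let S, T ∈ L†(D,H) and let V_S be a weakly continuous semigroup of bounded operators on H such that: for every ξ ∈ D and u ∈ H, lim_{α→0⁺} ⟨(V_S(α)ξ − ξ)/α, u⟩ = ⟨Sξ, u⟩; for every η ∈ D and u ∈ H, lim_{α→0⁺} ⟨(V_S(α)*η − η)/α, u⟩ = ⟨S†η, u⟩; and the quasi-strong commutation relation holds: ⟨V_S(α)Tξ, η⟩ − ⟨V_S(α)ξ, T†η⟩ = α⟨V_S(α)ξ, η⟩ for all ξ, η ∈ D and all α ≥ 0. Then S and T satisfy the weak commutation relation [S,T] = 1_D, i.e. ⟨Tξ, S†η⟩ − ⟨Sξ, T†η⟩ = ⟨ξ, η⟩ for all ξ, η ∈ D. -/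
open Filter Topology

/- STATEMENT 3: If S,T ∈ L†(D,H), V_S is a weakly continuous semigroup whose weak
derivative at 0 on D is S (and S† for the adjoint semigroup), and the quasi-strong
commutation relation ⟨V_S(α)Tξ, η⟩ − ⟨V_S(α)ξ, T†η⟩ = α⟨V_S(α)ξ, η⟩ holds, then S and T
satisfy the weak commutation relation [S,T] = 1_D. -/
theorem quasi_strong_implies_weak
    {H : Type*} [NormedAddCommGroup H] [InnerProductSpace ℂ H] [CompleteSpace H]
    (D : Submodule ℂ H) (hD : Dense (D : Set H))
    (S Sd T Td : D →ₗ[ℂ] H)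
    (hS : ∀ ξ η : D, (inner ℂ (S ξ) (η : H) : ℂ) = inner ℂ (ξ : H) (Sd η))
    (hT : ∀ ξ η : D, (inner ℂ (T ξ) (η : H) : ℂ) = inner ℂ (ξ : H) (Td η))
    (VS : ℝ → (H →L[ℂ] H))
    -- V_S is a weakly continuous semigroup
    (hVS0 : VS 0 = 1)
    (hVSsem : ∀ s t : ℝ, 0 ≤ s → 0 ≤ t → VS (s + t) = (VS s) ∘L (VS t))
    (hVSw : ∀ x y : H, ContinuousOn (fun t : ℝ => (inner ℂ (VS t x) y : ℂ)) (Set.Ici 0))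
    -- S is the weak derivative of V_S at 0 on D
    (hSgen : ∀ (ξ : D) (u : H),
      Tendsto (fun α : ℝ => (inner ℂ (((α : ℂ))⁻¹ • (VS α (ξ : H) - (ξ : H))) u : ℂ))
        (𝓝[>] (0 : ℝ)) (𝓝 ((inner ℂ (S ξ) u : ℂ))))
    -- S† is the weak derivative of V_S(·)* at 0 on D
    (hSdgen : ∀ (η : D) (u : H),
      Tendsto (fun α : ℝ =>
          (inner ℂ (((α : ℂ))⁻¹ • (ContinuousLinearMap.adjoint (VS α) (η : H) - (η : H))) u : ℂ))
        (𝓝[>] (0 : ℝ)) (𝓝 ((inner ℂ (Sd η) u : ℂ))))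
    -- quasi-strong commutation relation
    (hQS : ∀ (ξ η : D) (α : ℝ), 0 ≤ α →
      (inner ℂ (VS α (T ξ)) (η : H) : ℂ) - (inner ℂ (VS α (ξ : H)) (Td η) : ℂ)
        = (α : ℂ) * (inner ℂ (VS α (ξ : H)) (η : H) : ℂ)) :
    -- weak commutation relation [S,T] = 1_D
    ∀ ξ η : D,
      (inner ℂ (T ξ) (Sd η) : ℂ) - (inner ℂ (S ξ) (Td η) : ℂ) = (inner ℂ (ξ : H) (η : H) : ℂ) := by

  intro ξ η
  -- the function ⟨V(α)ξ, η⟩ tends to ⟨ξ, η⟩ as α → 0⁺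
  have hcont : Tendsto (fun α : ℝ => (inner ℂ (VS α (ξ : H)) (η : H) : ℂ)) (𝓝[>] (0 : ℝ))
      (𝓝 ((inner ℂ (ξ : H) (η : H) : ℂ))) := by
    have h0 : ContinuousWithinAt (fun t : ℝ => (inner ℂ (VS t (ξ : H)) (η : H) : ℂ))
        (Set.Ici 0) 0 := (hVSw (ξ : H) (η : H)) 0 (Set.self_mem_Ici)
    have h1 : Tendsto (fun t : ℝ => (inner ℂ (VS t (ξ : H)) (η : H) : ℂ)) (𝓝[Set.Ici 0] 0)
        (𝓝 ((inner ℂ (VS 0 (ξ : H)) (η : H) : ℂ))) := h0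
    rw [hVS0] at h1
    simpa using h1.mono_left (nhdsWithin_mono _ Set.Ioi_subset_Ici_self)
  -- the difference quotient expression tends to ⟨Tξ, Sdη⟩ − ⟨Sξ, Tdη⟩
  have hlim : Tendsto (fun α : ℝ =>
      (starRingEnd ℂ) (inner ℂ (((α : ℂ))⁻¹ • (ContinuousLinearMap.adjoint (VS α) (η : H) - (η : H))) (T ξ))
        - (inner ℂ (((α : ℂ))⁻¹ • (VS α (ξ : H) - (ξ : H))) (Td η) : ℂ)) (𝓝[>] (0 : ℝ))
      (𝓝 ((inner ℂ (T ξ) (Sd η) : ℂ) - (inner ℂ (S ξ) (Td η) : ℂ))) := by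
    have h1 : Tendsto (fun α : ℝ =>
        (starRingEnd ℂ) (inner ℂ (((α : ℂ))⁻¹ • (ContinuousLinearMap.adjoint (VS α) (η : H) - (η : H))) (T ξ)))
        (𝓝[>] (0 : ℝ)) (𝓝 ((starRingEnd ℂ) (inner ℂ (Sd η) (T ξ) : ℂ))) :=
      (Complex.continuous_conj.tendsto _).comp (hSdgen η (T ξ))
    rw [inner_conj_symm] at h1
    exact h1.sub (hSgen ξ (Td η))
  -- these two functions agree on (0, ∞)
  have heq : ∀ α : ℝ, α ∈ Set.Ioi (0:ℝ) →
      (starRingEnd ℂ) (inner ℂ (((α : ℂ))⁻¹ • (ContinuousLinearMap.adjoint (VS α) (η : H) - (η : H))) (T ξ))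
        - (inner ℂ (((α : ℂ))⁻¹ • (VS α (ξ : H) - (ξ : H))) (Td η) : ℂ)
        = (inner ℂ (VS α (ξ : H)) (η : H) : ℂ) := by
    intro α hα
    have hα' : (0:ℝ) < α := hα
    have hαne : ((α : ℂ)) ≠ 0 := by exact_mod_cast hα'.ne'
    rw [inner_smul_left, inner_smul_left, map_mul]
    simp only [Complex.conj_conj, map_inv₀, Complex.conj_ofReal]
    rw [inner_sub_left, inner_sub_left, map_sub, inner_conj_symm, inner_conj_symm,
      ContinuousLinearMap.adjoint_inner_right]
    have hq := hQS ξ η α hα'.le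
    have ht := hT ξ η
    field_simp
    linear_combination hq - ht
  have := tendsto_nhds_unique (hlim.congr' (eventually_nhdsWithin_of_forall heq)) hcont
  rw [this]
end

section
/- Let S, T ∈ L†(D,H) satisfy the weak commutation relation [S,T] = 1_D, and let ξ₀ ∈ D with ξ₀ ≠ 0 and Sξ₀ = 0. Then Tξ₀ ≠ 0 and ⟨Tξ₀, S†η⟩ = ⟨ξ₀, η⟩ for every η ∈ D; in particular Tξ₀ ∈ D((S†)*) with (S†)*(Tξ₀) = ξ₀, and hence T((S†)*(Tξ₀)) = Tξ₀, i.e. Tξ₀ is an eigenvector of T(S†)* with eigenvalue 1. -/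
/- STATEMENT 4: If S,T ∈ L†(D,H) satisfy [S,T] = 1_D weakly, ξ₀ ∈ D, ξ₀ ≠ 0 and Sξ₀ = 0,
then Tξ₀ ≠ 0, ⟨Tξ₀, S†η⟩ = ⟨ξ₀, η⟩ for all η ∈ D, Tξ₀ ∈ D((S†)*) with (S†)*(Tξ₀) = ξ₀,
and hence Tξ₀ is an eigenvector of T(S†)* with eigenvalue 1. -/
theorem eigenvector_of_kernel_vector
    {H : Type*} [NormedAddCommGroup H] [InnerProductSpace ℂ H]
    (D : Submodule ℂ H) (hD : Dense (D : Set H))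
    (S Sd T Td : D →ₗ[ℂ] H)
    (hS : ∀ ξ η : D, (inner ℂ (S ξ) (η : H) : ℂ) = inner ℂ (ξ : H) (Sd η))
    (hT : ∀ ξ η : D, (inner ℂ (T ξ) (η : H) : ℂ) = inner ℂ (ξ : H) (Td η))
    (hCR : ∀ ξ η : D,
      (inner ℂ (T ξ) (Sd η) : ℂ) - (inner ℂ (S ξ) (Td η) : ℂ) = (inner ℂ (ξ : H) (η : H) : ℂ))
    (ξ₀ : D) (hξ₀ : (ξ₀ : H) ≠ 0) (hSξ₀ : S ξ₀ = 0) :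
    T ξ₀ ≠ 0 ∧
    -- ⟨Tξ₀, S†η⟩ = ⟨ξ₀, η⟩ for every η ∈ D
    (∀ η : D, (inner ℂ (T ξ₀) (Sd η) : ℂ) = inner ℂ (ξ₀ : H) (η : H)) ∧
    -- Tξ₀ ∈ D((S†)*) with (S†)*(Tξ₀) = ξ₀
    (∀ η : D, (inner ℂ (Sd η) (T ξ₀) : ℂ) = inner ℂ (η : H) (ξ₀ : H)) ∧
    -- hence T((S†)*(Tξ₀)) = Tξ₀ : Tξ₀ is an eigenvector of T(S†)* with eigenvalue 1
    (∃ v : D, (v : H) = (ξ₀ : H) ∧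
      (∀ η : D, (inner ℂ (Sd η) (T ξ₀) : ℂ) = inner ℂ (η : H) (v : H)) ∧
      T v = (1 : ℂ) • T ξ₀) := by

  have key : ∀ η : D, (inner ℂ (T ξ₀) (Sd η) : ℂ) = inner ℂ (ξ₀ : H) (η : H) := by
    intro η
    have := hCR ξ₀ η
    simpa [hSξ₀] using this
  have hTne : T ξ₀ ≠ 0 := by
    intro h0
    have hz : ∀ η : D, (inner ℂ (ξ₀ : H) (η : H) : ℂ) = 0 := by
      intro η
      have := key η
      simp [h0] at this
      exact this.symm
    have hcont : Continuous fun x : H => (inner ℂ (ξ₀ : H) x : ℂ) :=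
      continuous_const.inner continuous_id
    have hall : (fun x : H => (inner ℂ (ξ₀ : H) x : ℂ)) = fun _ => 0 :=
      Continuous.ext_on hD hcont continuous_const (fun x hx => hz ⟨x, hx⟩)
    have : (inner ℂ (ξ₀ : H) (ξ₀ : H) : ℂ) = 0 := congrFun hall _
    exact hξ₀ (inner_self_eq_zero.mp this)
  refine ⟨hTne, key, ?_, ⟨ξ₀, rfl, ?_, by simp⟩⟩
  · intro η
    have := key η
    calc (inner ℂ (Sd η) (T ξ₀) : ℂ) = starRingEnd ℂ (inner ℂ (T ξ₀) (Sd η)) := by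
          rw [← inner_conj_symm]
      _ = starRingEnd ℂ (inner ℂ (ξ₀ : H) (η : H)) := by rw [this]
      _ = inner ℂ (η : H) (ξ₀ : H) := by rw [inner_conj_symm]
  · intro η
    have := key η
    calc (inner ℂ (Sd η) (T ξ₀) : ℂ) = starRingEnd ℂ (inner ℂ (T ξ₀) (Sd η)) := by
          rw [← inner_conj_symm]
      _ = starRingEnd ℂ (inner ℂ (ξ₀ : H) (η : H)) := by rw [this]
      _ = inner ℂ (η : H) (ξ₀ : H) := by rw [inner_conj_symm]
end

section
/- Let S, T ∈ L†(D,H) satisfy the weak commutation relation [S,T] = 1_D. Let n ≥ 1 and assume there exists a nonzero ξ₀ ∈ D with Sξ₀ = 0 such that the iterated vectors Tξ₀, T²ξ₀, …, T^{n−1}ξ₀ all belong to D. Then ⟨T^n ξ₀, S†η⟩ = n⟨T^{n−1}ξ₀, η⟩ for every η ∈ D; in particular T^n ξ₀ ∈ D((S†)*) with (S†)*(T^n ξ₀) = n T^{n−1}ξ₀ (so T^{n−1}ξ₀ is an eigenvector of (S†)*T with eigenvalue n), and T((S†)*(T^n ξ₀)) = n T^n ξ₀ (so T^n ξ₀ is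 an eigenvector of T(S†)* with eigenvalue n). -/
/- STATEMENT 5: If S,T ∈ L†(D,H) satisfy [S,T] = 1_D weakly, n ≥ 1, ξ₀ ∈ D is nonzero with
Sξ₀ = 0, and Tξ₀, …, T^{n−1}ξ₀ ∈ D (encoded by the sequence ξseq with ξseq k = T^k ξ₀ for
k ≤ n−1), then ⟨T^n ξ₀, S†η⟩ = n⟨T^{n−1}ξ₀, η⟩ for all η ∈ D; in particular
(S†)*(T^n ξ₀) = n T^{n−1}ξ₀ and T((S†)*(T^n ξ₀)) = n T^n ξ₀. -/
theorem eigenvectors_of_number_operator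
    {H : Type*} [NormedAddCommGroup H] [InnerProductSpace ℂ H]
    (D : Submodule ℂ H) (hD : Dense (D : Set H))
    (S Sd T Td : D →ₗ[ℂ] H)
    (hS : ∀ ξ η : D, (inner ℂ (S ξ) (η : H) : ℂ) = inner ℂ (ξ : H) (Sd η))
    (hT : ∀ ξ η : D, (inner ℂ (T ξ) (η : H) : ℂ) = inner ℂ (ξ : H) (Td η))
    (hCR : ∀ ξ η : D,
      (inner ℂ (T ξ) (Sd η) : ℂ) - (inner ℂ (S ξ) (Td η) : ℂ) = (inner ℂ (ξ : H) (η : H) : ℂ))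
    (n : ℕ) (hn : 1 ≤ n)
    (ξ₀ : D) (hξ₀ : (ξ₀ : H) ≠ 0) (hSξ₀ : S ξ₀ = 0)
    -- the iterated vectors T^k ξ₀ (k ≤ n−1) all belong to D:
    (ξseq : ℕ → D) (hseq0 : ξseq 0 = ξ₀)
    (hseq : ∀ k : ℕ, k + 1 < n → (ξseq (k + 1) : H) = T (ξseq k)) :
    -- ⟨T^n ξ₀, S†η⟩ = n ⟨T^{n−1} ξ₀, η⟩ for every η ∈ D
    (∀ η : D, (inner ℂ (T (ξseq (n - 1))) (Sd η) : ℂ)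
        = (n : ℂ) * inner ℂ ((ξseq (n - 1) : H)) (η : H)) ∧
    -- T^n ξ₀ ∈ D((S†)*) with (S†)*(T^n ξ₀) = n T^{n−1} ξ₀
    -- (so T^{n−1}ξ₀ is an eigenvector of (S†)*T with eigenvalue n)
    (∀ η : D, (inner ℂ (Sd η) (T (ξseq (n - 1))) : ℂ)
        = inner ℂ (η : H) ((n : ℂ) • (ξseq (n - 1) : H))) ∧
    -- T((S†)*(T^n ξ₀)) = n T^n ξ₀ : T^n ξ₀ is an eigenvector of T(S†)* with eigenvalue n
    T ((n : ℂ) • ξseq (n - 1)) = (n : ℂ) • T (ξseq (n - 1)) := by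
  -- Key: ∀ k ≤ n-1, S (ξseq k) = k • ξseq (k-1) as vectors of H
  have key : ∀ k : ℕ, k ≤ n - 1 → (S (ξseq k) : H) = (k : ℂ) • (ξseq (k - 1) : H) := by
    intro k
    induction k with
    | zero => intro _; simp [hseq0, hSξ₀]
    | succ k ih =>
      intro hk
      have hk' : k ≤ n - 1 := Nat.le_of_succ_le hk
      have hkn : k + 1 < n := by omega
      have ihk := ih hk'
      refine hD.eq_of_inner_left ℂ fun η hη => ?_
      lift η to D using hη
      have h1 : (inner ℂ (S (ξseq (k + 1))) (η : H) : ℂ)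
          = inner ℂ (T (ξseq k)) (Sd η) := by
        rw [hS, hseq k hkn]
      have h2 : (inner ℂ (T (ξseq k)) (Sd η) : ℂ)
          = inner ℂ (S (ξseq k)) (Td η) + inner ℂ (ξseq k : H) (η : H) := by
        have := hCR (ξseq k) η; linear_combination this
      have h3 : (inner ℂ (S (ξseq k)) (Td η) : ℂ)
          = (k : ℂ) * inner ℂ (ξseq (k - 1) : H) (Td η) := by
        rw [ihk, inner_smul_left]
        simp
      have h4 : (k : ℂ) * inner ℂ (ξseq (k - 1) : H) (Td η)
          = (k : ℂ) * inner ℂ (ξseq k : H) (η : H) := by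
        rcases Nat.eq_zero_or_pos k with hk0 | hk0
        · simp [hk0]
        · have : k - 1 + 1 < n := by omega
          rw [← hT, ← hseq (k - 1) this, Nat.sub_add_cancel hk0]
      have h5 : (inner ℂ (((k : ℂ) + 1) • (ξseq k : H)) (η : H) : ℂ)
          = ((k : ℂ) + 1) * inner ℂ (ξseq k : H) (η : H) := by
        rw [inner_smul_left]; simp [map_add]
      push_cast
      rw [h1, h2, h3, h4, h5]; ring
  have hmain : ∀ η : D, (inner ℂ (T (ξseq (n - 1))) (Sd η) : ℂ)
      = (n : ℂ) * inner ℂ ((ξseq (n - 1) : H)) (η : H) := by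
    intro η
    have h2 : (inner ℂ (T (ξseq (n - 1))) (Sd η) : ℂ)
        = inner ℂ (S (ξseq (n - 1))) (Td η) + inner ℂ (ξseq (n - 1) : H) (η : H) := by
      have := hCR (ξseq (n - 1)) η; linear_combination this
    have h3 : (inner ℂ (S (ξseq (n - 1))) (Td η) : ℂ)
        = ((n : ℂ) - 1) * inner ℂ (ξseq (n - 1 - 1) : H) (Td η) := by
      rw [key (n - 1) le_rfl, inner_smul_left]
      have : (((n - 1 : ℕ) : ℂ)) = (n : ℂ) - 1 := by
        push_cast [Nat.cast_sub hn]; ring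
      simp [this]
    have h4 : ((n : ℂ) - 1) * inner ℂ (ξseq (n - 1 - 1) : H) (Td η)
        = ((n : ℂ) - 1) * inner ℂ (ξseq (n - 1) : H) (η : H) := by
      rcases Nat.lt_or_ge 1 n with hn2 | hn2
      · have hlt : n - 1 - 1 + 1 < n := by omega
        have hidx : n - 1 - 1 + 1 = n - 1 := by omega
        have hTe : (T (ξseq (n - 1 - 1)) : H) = (ξseq (n - 1) : H) := by
          rw [← hseq _ hlt, hidx]
        rw [← hT, hTe]
      · have : n = 1 := le_antisymm hn2 hn
        simp [this]
    rw [h2, h3, h4]; ring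
  refine ⟨hmain, fun η => ?_, by simp⟩
  have := hmain η
  calc (inner ℂ (Sd η) (T (ξseq (n - 1))) : ℂ)
      = starRingEnd ℂ (inner ℂ (T (ξseq (n - 1))) (Sd η)) := by rw [inner_conj_symm]
    _ = starRingEnd ℂ ((n : ℂ) * inner ℂ ((ξseq (n - 1) : H)) (η : H)) := by rw [this]
    _ = (n : ℂ) * inner ℂ (η : H) (ξseq (n - 1) : H) := by
        rw [map_mul, inner_conj_symm]; simp
    _ = inner ℂ (η : H) ((n : ℂ) • (ξseq (n - 1) : H)) := by
        rw [inner_smul_right]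
end

section
/- Let S, T ∈ L†(D,H) satisfy the weak commutation relation [S,T] = 1_D. Let ξ ∈ D and n ≥ 1, and assume that T^j ξ ∈ D for all j ≤ n. Then for every k with 1 ≤ k ≤ n, Sξ belongs to the domain of ((T†)*)^k; more precisely, there exists a finite sequence ζ₀, ζ₁, …, ζ_k ∈ H with ζ₀ = Sξ and ⟨T†η, ζ_{j−1}⟩ = ⟨η, ζ_j⟩ for all η ∈ D and 1 ≤ j ≤ k (i.e. ζ_j = (T†)*ζ_{j−1}), and S(T^k ξ) − ζ_k = k T^{k−1} ξ. -/
/- STATEMENT 6: If S,T ∈ L†(D,H) satisfy [S,T] = 1_D weakly, ξ ∈ D, n ≥ 1 and T^j ξ ∈ D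
for all j ≤ n (encoded by ξseq), then for every 1 ≤ k ≤ n, Sξ belongs to the domain of
((T†)*)^k: there is a sequence ζ₀ = Sξ, ζ_j = (T†)*ζ_{j−1} (1 ≤ j ≤ k), and
S(T^k ξ) − ζ_k = k T^{k−1} ξ. -/
theorem commutator_power_formula
    {H : Type*} [NormedAddCommGroup H] [InnerProductSpace ℂ H]
    (D : Submodule ℂ H) (hD : Dense (D : Set H))
    (S Sd T Td : D →ₗ[ℂ] H)
    (hS : ∀ ξ η : D, (inner ℂ (S ξ) (η : H) : ℂ) = inner ℂ (ξ : H) (Sd η))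
    (hT : ∀ ξ η : D, (inner ℂ (T ξ) (η : H) : ℂ) = inner ℂ (ξ : H) (Td η))
    (hCR : ∀ ξ η : D,
      (inner ℂ (T ξ) (Sd η) : ℂ) - (inner ℂ (S ξ) (Td η) : ℂ) = (inner ℂ (ξ : H) (η : H) : ℂ))
    (n : ℕ) (hn : 1 ≤ n) (ξ : D)
    -- T^j ξ ∈ D for all j ≤ n, encoded by ξseq with ξseq j = T^j ξ:
    (ξseq : ℕ → D) (hseq0 : ξseq 0 = ξ)
    (hseq : ∀ j : ℕ, j < n → (ξseq (j + 1) : H) = T (ξseq j)) :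
    ∀ k : ℕ, 1 ≤ k → k ≤ n →
      ∃ ζ : ℕ → H,
        ζ 0 = S ξ ∧
        (∀ j : ℕ, 1 ≤ j → j ≤ k →
          ∀ η : D, (inner ℂ (Td η) (ζ (j - 1)) : ℂ) = inner ℂ (η : H) (ζ j)) ∧
        S (ξseq k) - ζ k = (k : ℂ) • (ξseq (k - 1) : H) := by
  -- helper 1 : ⟪η, S ξ_{m+1}⟫ = ⟪Td η, S ξ_m⟫ + ⟪η, ξ_m⟫
  have key : ∀ (η : D) (m : ℕ), m < n →
      (inner ℂ (η : H) (S (ξseq (m+1))) : ℂ)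
        = inner ℂ (Td η) (S (ξseq m)) + inner ℂ (η : H) ((ξseq m : H)) := by
    intro η m hm
    have h2 : (inner ℂ (S (ξseq (m+1))) (η : H) : ℂ)
        = inner ℂ ((ξseq m : H)) ((η : H)) + inner ℂ (S (ξseq m)) (Td η) := by
      rw [hS]
      rw [show ((ξseq (m+1)) : H) = T (ξseq m) from hseq m hm]
      linear_combination hCR (ξseq m) η
    have h3 := congrArg (starRingEnd ℂ) h2
    have h4 : (inner ℂ (η : H) (S (ξseq (m+1))) : ℂ)
        = inner ℂ (η : H) ((ξseq m : H)) + inner ℂ (Td η) (S (ξseq m)) := by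
      simpa [map_add, inner_conj_symm] using h3
    linear_combination h4
  -- helper 2 : ⟪η, ξ_{m+1}⟫ = ⟪Td η, ξ_m⟫
  have key2 : ∀ (η : D) (m : ℕ), m < n →
      (inner ℂ (η : H) ((ξseq (m+1) : H)) : ℂ) = inner ℂ (Td η) ((ξseq m : H)) := by
    intro η m hm
    have h2 : (inner ℂ (T (ξseq m)) ((η : H)) : ℂ) = inner ℂ ((ξseq m : H)) (Td η) := hT _ _
    have h3 := congrArg (starRingEnd ℂ) h2
    rw [show ((ξseq (m+1)) : H) = T (ξseq m) from hseq m hm]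
    simpa [inner_conj_symm] using h3
  intro k hk1 hkn
  refine ⟨fun j => S (ξseq j) - (j : ℂ) • ((ξseq (j - 1) : H)), ?_, ?_, ?_⟩
  · simp [hseq0]
  · intro j hj1 hjk η
    obtain ⟨m, rfl⟩ := Nat.exists_eq_add_of_le hj1
    have hmn : m < n := by omega
    simp only [show 1 + m = m + 1 from by omega, Nat.add_sub_cancel]
    rw [inner_sub_right, inner_sub_right, inner_smul_right, inner_smul_right,
      key η m hmn]
    have hlast : (m : ℂ) * inner ℂ (Td η) ((ξseq (m - 1) : H))
        = (m : ℂ) * (inner ℂ (η : H) ((ξseq m : H)) : ℂ) := by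
      rcases m with _ | l
      · simp
      · have hln : l < n := by omega
        rw [show l + 1 - 1 = l from rfl, key2 η l hln]
    rw [hlast]
    push_cast
    ring
  · rw [sub_sub_cancel]
end

section
/- Let S, T ∈ L†(D,H) satisfy the weak commutation relation [S,T] = 1_D. Let n ≥ 1 and assume there exists a nonzero ξ₀ ∈ D with Sξ₀ = 0 such that the iterated vectors Tξ₀, T²ξ₀, …, T^{n−1}ξ₀ all belong to D. Then the vectors ξ₀, Tξ₀, T²ξ₀, …, T^n ξ₀ are linearly independent in H. -/
/- STATEMENT 7: If S,T ∈ L†(D,H) satisfy [S,T] = 1_D weakly, n ≥ 1, ξ₀ ∈ D is nonzero with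
Sξ₀ = 0 and Tξ₀, …, T^{n−1}ξ₀ ∈ D (encoded by ξseq), then the vectors
ξ₀, Tξ₀, …, T^n ξ₀ are linearly independent in H. -/
theorem iterated_vectors_linearIndependent
    {H : Type*} [NormedAddCommGroup H] [InnerProductSpace ℂ H]
    (D : Submodule ℂ H) (hD : Dense (D : Set H))
    (S Sd T Td : D →ₗ[ℂ] H)
    (hS : ∀ ξ η : D, (inner ℂ (S ξ) (η : H) : ℂ) = inner ℂ (ξ : H) (Sd η))
    (hT : ∀ ξ η : D, (inner ℂ (T ξ) (η : H) : ℂ) = inner ℂ (ξ : H) (Td η))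
    (hCR : ∀ ξ η : D,
      (inner ℂ (T ξ) (Sd η) : ℂ) - (inner ℂ (S ξ) (Td η) : ℂ) = (inner ℂ (ξ : H) (η : H) : ℂ))
    (n : ℕ) (hn : 1 ≤ n)
    (ξ₀ : D) (hξ₀ : (ξ₀ : H) ≠ 0) (hSξ₀ : S ξ₀ = 0)
    -- the iterated vectors T^k ξ₀ (k ≤ n−1) all belong to D:
    (ξseq : ℕ → D) (hseq0 : ξseq 0 = ξ₀)
    (hseq : ∀ k : ℕ, k + 1 < n → (ξseq (k + 1) : H) = T (ξseq k)) :
    -- ξ₀, Tξ₀, …, T^{n−1}ξ₀, T^n ξ₀ are linearly independent in H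
    LinearIndependent ℂ
      (fun k : Fin (n + 1) =>
        if (k : ℕ) < n then ((ξseq (k : ℕ) : H)) else T (ξseq (n - 1))) := by
  classical
  set w : ℕ → H := fun k => if k < n then ((ξseq k : H)) else T (ξseq (n - 1)) with hw
  have hdense : ∀ x : H, (∀ η : D, (inner ℂ x (η : H) : ℂ) = 0) → x = 0 :=
    fun x hx => hD.eq_zero_of_inner_left (𝕜 := ℂ) (fun v hv => hx ⟨v, hv⟩)
  -- Strong form: S (ξseq k) = k • ξseq (k-1) for k < n
  have SL : ∀ k, k < n → (S (ξseq k) : H) = (k : ℂ) • ((ξseq (k - 1) : H)) := by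
    intro k
    induction k with
    | zero => intro _; simp [hseq0, hSξ₀]
    | succ k ih =>
      intro hk1
      have hk : k < n := Nat.lt_of_succ_lt hk1
      have e : ∀ η : D, (inner ℂ (S (ξseq (k + 1))) (η : H) : ℂ)
          = ((k : ℂ) + 1) * inner ℂ ((ξseq k : H)) (η : H) := by
        intro η
        have step1 : (inner ℂ (S (ξseq (k + 1))) (η : H) : ℂ)
            = inner ℂ (T (ξseq k)) ((Sd η : H)) := by
          rw [hS]; rw [hseq k hk1]
        have step2 : (inner ℂ (T (ξseq k)) ((Sd η : H)) : ℂ)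
            = inner ℂ (S (ξseq k)) ((Td η : H)) + inner ℂ ((ξseq k : H)) (η : H) := by
          linear_combination hCR (ξseq k) η
        have step3 : (inner ℂ (S (ξseq k)) ((Td η : H)) : ℂ)
            = (k : ℂ) * inner ℂ ((ξseq k : H)) (η : H) := by
          cases k with
          | zero => rw [hseq0, hSξ₀]; simp
          | succ j =>
            have hj : j + 1 < n := hk
            rw [ih hk, inner_smul_left]
            have : ((ξseq (j + 1 - 1) : H)) = (ξseq j : H) := by norm_num
            rw [this, ← hT (ξseq j) η, ← hseq j hj]
            push_cast
            simp [map_add, map_natCast]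
        rw [step1, step2, step3]; ring
      have hz : S (ξseq (k + 1)) - ((k : ℂ) + 1) • ((ξseq k : H)) = 0 := by
        apply hdense
        intro η
        rw [inner_sub_left, inner_smul_left, e η]
        simp [map_add, map_natCast]
      have : S (ξseq (k + 1)) = ((k : ℂ) + 1) • ((ξseq k : H)) := by
        rw [← sub_eq_zero]; exact hz
      rw [this]
      push_cast
      norm_num
  -- Weak recursion formula for the vectors w k, k ≤ n
  have C : ∀ k, k ≤ n → ∀ η : D,
      (inner ℂ (w k) ((Sd η : H)) : ℂ) = (k : ℂ) * inner ℂ (w (k - 1)) (η : H) := by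
    intro k hk η
    cases k with
    | zero =>
      have h0 : w 0 = (ξseq 0 : H) := by
        simp only [hw]; rw [if_pos (by omega : (0:ℕ) < n)]
      rw [h0, ← hS (ξseq 0) η, hseq0, hSξ₀]
      simp
    | succ k' =>
      have hk' : k' < n := hk
      have hwk : w (k' + 1) = T (ξseq k') := by
        by_cases h : k' + 1 < n
        · simp only [hw]; rw [if_pos h]; exact hseq k' h
        · have hne : k' = n - 1 := by omega
          simp only [hw]; rw [if_neg h, hne]
      have hwk' : w k' = (ξseq k' : H) := by simp only [hw]; rw [if_pos hk']
      have step2 : (inner ℂ (T (ξseq k')) ((Sd η : H)) : ℂ)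
          = inner ℂ (S (ξseq k')) ((Td η : H)) + inner ℂ ((ξseq k' : H)) (η : H) := by
        linear_combination hCR (ξseq k') η
      have step3 : (inner ℂ (S (ξseq k')) ((Td η : H)) : ℂ)
          = (k' : ℂ) * inner ℂ ((ξseq k' : H)) (η : H) := by
        cases k' with
        | zero => rw [hseq0, hSξ₀]; simp
        | succ j =>
          have hj : j + 1 < n := hk'
          rw [SL (j + 1) hk', inner_smul_left]
          have : ((ξseq (j + 1 - 1) : H)) = (ξseq j : H) := by norm_num
          rw [this, ← hT (ξseq j) η, ← hseq j hj]
          push_cast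
          simp [map_add, map_natCast]
      have hsub : (k' + 1 : ℕ) - 1 = k' := by omega
      rw [hwk, step2, step3, hsub, hwk']
      push_cast
      ring
  -- Main induction: a vanishing combination of w 0, …, w m has zero coefficients
  have main : ∀ m, m ≤ n → ∀ c : ℕ → ℂ,
      (∑ k ∈ Finset.range (m + 1), c k • w k) = 0 → ∀ k, k ≤ m → c k = 0 := by
    intro m
    induction m with
    | zero =>
      intro _ c hc k hk
      interval_cases k
      have h0 : c 0 • w 0 = 0 := by simpa using hc
      have hw0 : w 0 = (ξ₀ : H) := by
        simp only [hw]; rw [if_pos (by omega : (0:ℕ) < n), hseq0]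
      rcases smul_eq_zero.mp h0 with h | h
      · exact h
      · exact absurd (hw0 ▸ h) hξ₀
    | succ m ih =>
      intro hm c hc
      have hx : (∑ j ∈ Finset.range (m + 1), (((j : ℂ) + 1) * c (j + 1)) • w j) = 0 := by
        apply hdense
        intro η
        calc (inner ℂ (∑ j ∈ Finset.range (m + 1), (((j : ℂ) + 1) * c (j + 1)) • w j)
                (η : H) : ℂ)
            = ∑ j ∈ Finset.range (m + 1),
                (starRingEnd ℂ) (c (j + 1)) * (((j : ℂ) + 1) * inner ℂ (w j) (η : H)) := by
              rw [sum_inner]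
              refine Finset.sum_congr rfl fun j _ => ?_
              rw [inner_smul_left]
              simp only [map_mul, map_add, map_natCast, map_one]
              ring
          _ = ∑ k ∈ Finset.range (m + 2),
                (starRingEnd ℂ) (c k) * ((k : ℂ) * inner ℂ (w (k - 1)) (η : H)) := by
              rw [Finset.sum_range_succ' (fun k =>
                (starRingEnd ℂ) (c k) * ((k : ℂ) * inner ℂ (w (k - 1)) (η : H))) (m + 1)]
              simp only [Nat.cast_zero, zero_mul, mul_zero, add_zero, Nat.add_sub_cancel]
              refine Finset.sum_congr rfl fun j _ => ?_
              push_cast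
              ring
          _ = ∑ k ∈ Finset.range (m + 2), (inner ℂ (c k • w k) ((Sd η : H)) : ℂ) := by
              refine Finset.sum_congr rfl fun k hkmem => ?_
              have hkn : k ≤ n := by
                have := Finset.mem_range.mp hkmem; omega
              rw [inner_smul_left, C k hkn η]
          _ = inner ℂ (∑ k ∈ Finset.range (m + 2), c k • w k) ((Sd η : H)) := by
              rw [sum_inner]
          _ = 0 := by rw [hc, inner_zero_left]
      have h2 := ih (Nat.le_of_succ_le hm) _ hx
      have hc1 : ∀ j, j ≤ m → c (j + 1) = 0 := by
        intro j hj
        have h3 := h2 j hj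
        have hj1 : ((j : ℂ) + 1) ≠ 0 := Nat.cast_add_one_ne_zero j
        rcases mul_eq_zero.mp h3 with h | h
        · exact absurd h hj1
        · exact h
      intro k hk
      match k, hk with
      | 0, _ =>
        have hsum : (∑ k ∈ Finset.range (m + 2), c k • w k) = c 0 • w 0 := by
          rw [Finset.sum_range_succ' (fun k => c k • w k) (m + 1)]
          have : ∀ j ∈ Finset.range (m + 1), c (j + 1) • w (j + 1) = 0 := by
            intro j hjm
            rw [hc1 j (by simpa using Nat.lt_succ_iff.mp (Finset.mem_range.mp hjm))]
            simp
          rw [Finset.sum_congr rfl this]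
          simp
        have h0 : c 0 • w 0 = 0 := by rw [← hsum, hc]
        have hw0 : w 0 = (ξ₀ : H) := by
          simp only [hw]; rw [if_pos (by omega : (0:ℕ) < n), hseq0]
        rcases smul_eq_zero.mp h0 with h | h
        · exact h
        · exact absurd (hw0 ▸ h) hξ₀
      | (j + 1), hk => exact hc1 j (by omega)
  -- Conclude
  rw [Fintype.linearIndependent_iff]
  intro g hg i
  set c : ℕ → ℂ := fun k => if h : k < n + 1 then g ⟨k, h⟩ else 0 with hcdef
  have hc : ∑ k ∈ Finset.range (n + 1), c k • w k = 0 := by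
    rw [Finset.sum_range (fun k => c k • w k)]
    rw [← hg]
    refine Finset.sum_congr rfl fun i _ => ?_
    simp [hcdef, hw, i.isLt, i.is_le]
  have h := main n le_rfl c hc (i : ℕ) (by omega)
  simpa [hcdef, i.isLt, i.is_le] using h
end

section
/- Let S, T ∈ L†(D,H) satisfy the weak commutation relation [S,T] = 1_D. Let n ≥ 1 and assume there exists a nonzero ξ₀ ∈ D with Sξ₀ = 0 such that Tξ₀, T²ξ₀, …, T^{n−1}ξ₀ all belong to D. Let N₀ be the linear span of {ξ₀, Tξ₀, …, T^n ξ₀}; the operator (T(S†)*)₀ acts on N₀ by sending Σ_{k=0}^n μ_k T^k ξ₀ to Σ_{k=0}^n k μ_k T^k ξ₀. Then the point spectrum of (T(S†)*)₀ consists exactly of the numbers {0, 1, …, n}, and each eigenvalue is simple: if μ₀, …, μ_n ∈ ℂ are not all zero, λ ∈ ℂ, and Σ_{k=0}^n k μ_k T^k ξ₀ = λ Σ_{k=0}^n μ_k T^k ξ₀, then there exists m ∈ {0, 1, …, n} with λ = m and μ_j = 0 for every j ≠ m. -/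
/- STATEMENT 8: With S,T, ξ₀, ξseq as before, let N₀ = span{ξ₀, Tξ₀, …, T^n ξ₀} and let
(T(S†)*)₀ act on N₀ by Σ μ_k T^k ξ₀ ↦ Σ k μ_k T^k ξ₀. Then the point spectrum of (T(S†)*)₀
is exactly {0, 1, …, n} and each eigenvalue is simple. -/
theorem point_spectrum_of_restricted_number_operator
    {H : Type*} [NormedAddCommGroup H] [InnerProductSpace ℂ H]
    (D : Submodule ℂ H) (hD : Dense (D : Set H))
    (S Sd T Td : D →ₗ[ℂ] H)
    (hS : ∀ ξ η : D, (inner ℂ (S ξ) (η : H) : ℂ) = inner ℂ (ξ : H) (Sd η))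
    (hT : ∀ ξ η : D, (inner ℂ (T ξ) (η : H) : ℂ) = inner ℂ (ξ : H) (Td η))
    (hCR : ∀ ξ η : D,
      (inner ℂ (T ξ) (Sd η) : ℂ) - (inner ℂ (S ξ) (Td η) : ℂ) = (inner ℂ (ξ : H) (η : H) : ℂ))
    (n : ℕ) (hn : 1 ≤ n)
    (ξ₀ : D) (hξ₀ : (ξ₀ : H) ≠ 0) (hSξ₀ : S ξ₀ = 0)
    -- the iterated vectors T^k ξ₀ (k ≤ n−1) all belong to D:
    (ξseq : ℕ → D) (hseq0 : ξseq 0 = ξ₀)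
    (hseq : ∀ k : ℕ, k + 1 < n → (ξseq (k + 1) : H) = T (ξseq k))
    -- the vectors T^k ξ₀, k = 0, …, n:
    (vec : ℕ → H)
    (hvec : ∀ k : ℕ, vec k = if k < n then ((ξseq k : H)) else T (ξseq (n - 1))) :
    -- every m ∈ {0,…,n} is an eigenvalue of (T(S†)*)₀ ...
    (∀ m : ℕ, m ≤ n →
      ∃ μ : ℕ → ℂ, (∃ k ≤ n, μ k ≠ 0) ∧
        ∑ k ∈ Finset.range (n + 1), ((k : ℂ) * μ k) • vec k
          = (m : ℂ) • ∑ k ∈ Finset.range (n + 1), μ k • vec k) ∧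
    -- ... and these are the only eigenvalues, each of them simple:
    (∀ (μ : ℕ → ℂ) (lam : ℂ), (∃ k ≤ n, μ k ≠ 0) →
      ∑ k ∈ Finset.range (n + 1), ((k : ℂ) * μ k) • vec k
        = lam • ∑ k ∈ Finset.range (n + 1), μ k • vec k →
      ∃ m ≤ n, lam = (m : ℂ) ∧ ∀ j ≤ n, j ≠ m → μ j = 0) := by
  -- density lemma
  have hdense : ∀ x : H, (∀ η : D, (inner ℂ x (η : H) : ℂ) = 0) → x = 0 := by
    intro x hx
    have hc : IsClosed {y : H | (inner ℂ x y : ℂ) = 0} :=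
      isClosed_eq (continuous_const.inner continuous_id) continuous_const
    have hsub : (D : Set H) ⊆ {y : H | (inner ℂ x y : ℂ) = 0} := fun y hy => hx ⟨y, hy⟩
    have : (Set.univ : Set H) ⊆ {y : H | (inner ℂ x y : ℂ) = 0} := by
      rw [← hD.closure_eq]; exact closure_minimal hsub hc
    exact inner_self_eq_zero.mp (this (Set.mem_univ x))
  have hvlt : ∀ k, k < n → vec k = (ξseq k : H) := by
    intro k hk; rw [hvec k, if_pos hk]
  have hvec0 : vec 0 = (ξ₀ : H) := by rw [hvlt 0 hn, hseq0]
  have hvecstep : ∀ k, k + 1 ≤ n → vec (k + 1) = T (ξseq k) := by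
    intro k hk
    rcases lt_or_eq_of_le hk with h | h
    · rw [hvlt _ h, hseq k h]
    · rw [hvec, if_neg (by omega)]
      congr 1; congr 1; omega
  -- S (ξseq k) = k • vec (k-1) for k < n
  have hSvec : ∀ k, k < n → S (ξseq k) = (k : ℂ) • vec (k - 1) := by
    intro k
    induction k with
    | zero => intro _; rw [hseq0]; simp [hSξ₀]
    | succ k ih =>
      intro hk
      have hk' : k < n := by omega
      have ihv := ih hk'
      apply sub_eq_zero.mp
      apply hdense
      intro η
      rw [inner_sub_left]
      have h1 : (inner ℂ (S (ξseq (k+1))) (η : H) : ℂ)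
          = inner ℂ ((ξseq (k+1) : H)) (Sd η) := hS _ _
      have h2 : ((ξseq (k+1) : H)) = T (ξseq k) := hseq k hk
      have h3 : (inner ℂ (T (ξseq k)) (Sd η) : ℂ)
          = inner ℂ (S (ξseq k)) (Td η) + inner ℂ ((ξseq k : H)) ((η : H)) := by
        have := hCR (ξseq k) η; linear_combination this
      have h4 : (inner ℂ (S (ξseq k)) (Td η) : ℂ) = (k : ℂ) * inner ℂ (vec k) ((η : H)) := by
        rw [ihv, inner_smul_left]
        rcases Nat.eq_zero_or_pos k with h | h
        · simp [h]
        · have hkm : k - 1 < n := by omega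
          rw [hvlt _ hkm, ← hT]
          have hTv : (T (ξseq (k-1)) : H) = vec k := by
            have := hvecstep (k-1) (by omega)
            rw [← this]; congr 1; omega
          rw [hTv]
          simp
      have h5 : (inner ℂ ((ξseq k : H)) ((η : H)) : ℂ) = inner ℂ (vec k) ((η : H)) := by
        rw [hvlt _ hk']
      rw [h1, h2, h3, h4, h5, inner_smul_left]
      simp only [map_natCast, Nat.add_sub_cancel]
      push_cast
      ring
  -- lowering identity
  have hlow : ∀ k, k ≤ n → ∀ η : D,
      (inner ℂ (vec k) ((Sd η : H)) : ℂ) = (k : ℂ) * inner ℂ (vec (k - 1)) ((η : H)) := by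
    intro k hk η
    rcases lt_or_eq_of_le hk with h | h
    · rw [hvlt _ h, ← hS, hSvec _ h, inner_smul_left]
      simp
    · rw [h]
      have hn1 : n - 1 < n := by omega
      have hvn : vec n = T (ξseq (n-1)) := by rw [hvec, if_neg (lt_irrefl n)]
      rw [hvn]
      have h3 : (inner ℂ (T (ξseq (n-1))) (Sd η) : ℂ)
          = inner ℂ (S (ξseq (n-1))) (Td η) + inner ℂ ((ξseq (n-1) : H)) ((η : H)) := by
        have := hCR (ξseq (n-1)) η; linear_combination this
      rw [h3, hSvec _ hn1, inner_smul_left]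
      rcases Nat.eq_zero_or_pos (n - 1) with h0 | h0
      · have hn1' : n = 1 := by omega
        subst hn1'
        simp [hvec0, hseq0]
      · have hm : n - 1 - 1 < n := by omega
        rw [hvlt _ hm, ← hT]
        have hTv : (T (ξseq (n-1-1)) : H) = vec (n-1) := by
          have := hvecstep (n-1-1) (by omega)
          rw [← this]; congr 1; omega
        rw [hTv, show ((ξseq (n-1) : H)) = vec (n-1) from (hvlt _ hn1).symm]
        simp only [map_natCast]
        have : ((n - 1 : ℕ) : ℂ) + 1 = (n : ℂ) := by
          have : ((n - 1 : ℕ) : ℂ) = (n : ℂ) - 1 := by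
            push_cast [Nat.cast_sub (by omega : 1 ≤ n)]; ring
          rw [this]; ring
        linear_combination inner ℂ (vec (n-1)) ((η:H)) * this
  -- sum lowering
  have hsum_low : ∀ (c : ℕ → ℂ) (m : ℕ), m ≤ n →
      ∑ k ∈ Finset.range (m + 1), c k • vec k = 0 →
      ∑ k ∈ Finset.range (m + 1), ((k : ℂ) * c k) • vec (k - 1) = 0 := by
    intro c m hm hsum
    apply hdense
    intro η
    rw [sum_inner]
    have : ∀ k ∈ Finset.range (m + 1),
        (inner ℂ (((k : ℂ) * c k) • vec (k - 1)) ((η : H)) : ℂ)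
          = inner ℂ (c k • vec k) ((Sd η : H)) := by
      intro k hk
      have hkn : k ≤ n := by
        have := Finset.mem_range.mp hk; omega
      rw [inner_smul_left, inner_smul_left, hlow k hkn η]
      simp only [map_mul, map_natCast]
      ring
    rw [Finset.sum_congr rfl this, ← sum_inner, hsum, inner_zero_left]
  -- linear independence
  have hLI : ∀ m, m ≤ n → ∀ c : ℕ → ℂ,
      ∑ k ∈ Finset.range (m + 1), c k • vec k = 0 → ∀ k ≤ m, c k = 0 := by
    intro m
    induction m with
    | zero =>
      intro _ c hsum k hk
      interval_cases k
      have : c 0 • vec 0 = 0 := by simpa using hsum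
      rw [hvec0] at this
      rcases smul_eq_zero.mp this with h | h
      · exact h
      · exact absurd h hξ₀
    | succ m ih =>
      intro hm c hsum k hk
      have hlow' := hsum_low c (m+1) hm hsum
      have htail : ∑ j ∈ Finset.range (m + 1), (((j:ℕ)+1 : ℂ) * c (j + 1)) • vec j = 0 := by
        rw [Finset.sum_range_succ'] at hlow'
        simpa using hlow'
      have hzero : ∀ j ≤ m, ((j:ℕ)+1 : ℂ) * c (j + 1) = 0 :=
        ih (by omega) _ htail
      have hc : ∀ j ≤ m, c (j + 1) = 0 := by
        intro j hj
        have := hzero j hj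
        have hne : ((j:ℕ)+1 : ℂ) ≠ 0 := Nat.cast_add_one_ne_zero j
        exact (mul_eq_zero.mp this).resolve_left hne
      rcases Nat.eq_zero_or_pos k with h0 | h0
      · subst h0
        have : ∑ k ∈ Finset.range (m + 2), c k • vec k = c 0 • vec 0 := by
          rw [Finset.sum_range_succ']
          have : ∑ i ∈ Finset.range (m + 1), c (i + 1) • vec (i + 1) = 0 := by
            apply Finset.sum_eq_zero
            intro i hi
            rw [hc i (by exact Nat.lt_succ_iff.mp (Finset.mem_range.mp hi)), zero_smul]
          rw [this, zero_add]
        rw [this] at hsum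
        rw [hvec0] at hsum
        exact (smul_eq_zero.mp hsum).resolve_right hξ₀
      · obtain ⟨j, rfl⟩ := Nat.exists_eq_add_of_lt h0
        rw [zero_add] at *
        exact hc j (by omega)
  constructor
  · -- existence of eigenvectors
    intro m hm
    refine ⟨fun k => if k = m then 1 else 0, ⟨m, hm, by simp⟩, ?_⟩
    have hmem : m ∈ Finset.range (n + 1) := Finset.mem_range.mpr (by omega)
    rw [Finset.sum_eq_single_of_mem m hmem (by intro b _ hb; simp [hb]),
        Finset.sum_eq_single_of_mem m hmem (by intro b _ hb; simp [hb])]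
    simp
  · -- only eigenvalues, simple
    intro μ lam ⟨k₀, hk₀, hμk₀⟩ heq
    have hz : ∑ k ∈ Finset.range (n + 1), (((k : ℂ) - lam) * μ k) • vec k = 0 := by
      have : ∑ k ∈ Finset.range (n + 1), (((k : ℂ) - lam) * μ k) • vec k
          = ∑ k ∈ Finset.range (n + 1), ((k : ℂ) * μ k) • vec k
            - lam • ∑ k ∈ Finset.range (n + 1), μ k • vec k := by
        rw [Finset.smul_sum, ← Finset.sum_sub_distrib]
        apply Finset.sum_congr rfl
        intro k _
        rw [smul_smul, ← sub_smul]
        ring_nf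
      rw [this, heq, sub_self]
    have hall : ∀ k ≤ n, ((k : ℂ) - lam) * μ k = 0 := hLI n le_rfl _ hz
    have hlam : lam = (k₀ : ℂ) := by
      have := hall k₀ hk₀
      rcases mul_eq_zero.mp this with h | h
      · exact (sub_eq_zero.mp h).symm
      · exact absurd h hμk₀
    refine ⟨k₀, hk₀, hlam, ?_⟩
    intro j hj hjne
    have := hall j hj
    rcases mul_eq_zero.mp this with h | h
    · exfalso
      rw [hlam] at h
      have : (j : ℂ) = (k₀ : ℂ) := sub_eq_zero.mp h
      exact hjne (Nat.cast_injective this)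
    · exact h
end

section
/- Let S, T ∈ L†(D,H) satisfy the weak commutation relation [S,T] = 1_D. Let ξ₀, η₀ ∈ D with Sξ₀ = 0, T†η₀ = 0 and ⟨ξ₀, η₀⟩ = 1. Let n, m ≥ 1 and assume that T^k ξ₀ ∈ D for all k ≤ n and (S†)^r η₀ ∈ D for all r ≤ m (iterated applications). Then the families {T^i ξ₀ / √(i!)} and {(S†)^j η₀ / √(j!)} are biorthogonal: for all 0 ≤ i ≤ n and 0 ≤ j ≤ m, ⟨T^i ξ₀, (S†)^j η₀⟩ = i!·δ_{ij} (equivalently, ⟨T^i ξ₀/√(i!), (S†)^j η₀/√(j!)⟩ = δ_{ij}). -/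
/- STATEMENT 10: If S,T ∈ L†(D,H) satisfy [S,T] = 1_D weakly, Sξ₀ = 0, T†η₀ = 0,
⟨ξ₀,η₀⟩ = 1, T^k ξ₀ ∈ D for k ≤ n and (S†)^r η₀ ∈ D for r ≤ m, then the families
{T^i ξ₀/√(i!)} and {(S†)^j η₀/√(j!)} are biorthogonal:
⟨T^i ξ₀, (S†)^j η₀⟩ = i!·δ_{ij} for 0 ≤ i ≤ n, 0 ≤ j ≤ m. -/
theorem biorthogonality_of_eigenvector_families
    {H : Type*} [NormedAddCommGroup H] [InnerProductSpace ℂ H]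
    (D : Submodule ℂ H) (hD : Dense (D : Set H))
    (S Sd T Td : D →ₗ[ℂ] H)
    (hS : ∀ ξ η : D, (inner ℂ (S ξ) (η : H) : ℂ) = inner ℂ (ξ : H) (Sd η))
    (hT : ∀ ξ η : D, (inner ℂ (T ξ) (η : H) : ℂ) = inner ℂ (ξ : H) (Td η))
    (hCR : ∀ ξ η : D,
      (inner ℂ (T ξ) (Sd η) : ℂ) - (inner ℂ (S ξ) (Td η) : ℂ) = (inner ℂ (ξ : H) (η : H) : ℂ))
    (n m : ℕ) (hn : 1 ≤ n) (hm : 1 ≤ m)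
    (ξ₀ η₀ : D) (hSξ₀ : S ξ₀ = 0) (hTdη₀ : Td η₀ = 0)
    (hnorm : (inner ℂ (ξ₀ : H) (η₀ : H) : ℂ) = 1)
    -- T^k ξ₀ ∈ D for all k ≤ n:
    (ξseq : ℕ → D) (hξ0 : ξseq 0 = ξ₀)
    (hξs : ∀ k : ℕ, k < n → (ξseq (k + 1) : H) = T (ξseq k))
    -- (S†)^r η₀ ∈ D for all r ≤ m:
    (ηseq : ℕ → D) (hη0 : ηseq 0 = η₀)
    (hηs : ∀ r : ℕ, r < m → (ηseq (r + 1) : H) = Sd (ηseq r)) :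
    ∀ i ≤ n, ∀ j ≤ m,
      (inner ℂ (ξseq i : H) (ηseq j : H) : ℂ)
        = if i = j then (Nat.factorial i : ℂ) else 0 := by
  -- Key fact: S (ξseq i) = i • ξseq (i-1) for i ≤ n.
  have key : ∀ i, i ≤ n → S (ξseq i) = (i : ℂ) • (ξseq (i - 1) : H) := by
    intro i hi
    induction i with
    | zero => simp [hξ0, hSξ₀]
    | succ i ih =>
      have hi' : i ≤ n := Nat.le_of_succ_le hi
      have ihs := ih hi'
      refine hD.eq_of_inner_left (𝕜 := ℂ) (fun v hv => ?_)
      obtain ⟨η, rfl⟩ : ∃ η : D, (η : H) = v := ⟨⟨v, hv⟩, rfl⟩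
      have h1 : (inner ℂ (S (ξseq (i+1))) (η : H) : ℂ) = inner ℂ ((ξseq (i+1)) : H) (Sd η) :=
        hS _ _
      rw [h1, hξs i (Nat.lt_of_succ_le hi)]
      have h2 := hCR (ξseq i) η
      have h3 : (inner ℂ (T (ξseq i)) (Sd η) : ℂ)
          = inner ℂ (S (ξseq i)) (Td η) + inner ℂ ((ξseq i) : H) (η : H) := by
        linear_combination h2
      rw [h3, ihs, inner_smul_left]
      cases i with
      | zero =>
        simp [hξ0, hnorm]
      | succ k =>
        have hks : ((ξseq (k+1)) : H) = T (ξseq k) := hξs k (by omega)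
        simp only [Nat.add_sub_cancel]
        rw [← hT, ← hks, inner_smul_left]
        simp only [Complex.conj_natCast]
        push_cast
        ring
  -- Base fact: ⟨ξseq i, η₀⟩ = 0 for 1 ≤ i ≤ n.
  have base : ∀ i, 1 ≤ i → i ≤ n → (inner ℂ ((ξseq i) : H) ((η₀ : D) : H) : ℂ) = 0 := by
    intro i h1 h2
    obtain ⟨k, rfl⟩ := Nat.exists_eq_add_of_le h1
    rw [Nat.add_comm 1 k, hξs k (by omega), hT, hTdη₀, inner_zero_right]
  -- Main induction on j.
  have main : ∀ j ≤ m, ∀ i ≤ n,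
      (inner ℂ (ξseq i : H) (ηseq j : H) : ℂ)
        = if i = j then (Nat.factorial i : ℂ) else 0 := by
    intro j hj
    induction j with
    | zero =>
      intro i hi
      cases i with
      | zero => simp [hξ0, hη0, hnorm]
      | succ k =>
        rw [hη0]
        simp only [Nat.succ_ne_zero, if_false]
        exact base (k+1) (by omega) hi
    | succ j ih =>
      intro i hi
      rw [hηs j (by omega), ← hS, key i hi, inner_smul_left]
      cases i with
      | zero => simp
      | succ k =>
        simp only [Nat.add_sub_cancel]
        rw [ih (by omega) k (by omega)]
        by_cases hkj : k = j
        · subst hkj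
          simp only [if_pos rfl, Complex.conj_natCast, Nat.factorial_succ]
          push_cast
          ring
        · simp [hkj, fun h : k + 1 = j + 1 => hkj (Nat.succ_injective h)]
  intro i hi j hj
  exact main j hj i hi
end

section
/- Let S, T ∈ L†(D,H) satisfy the weak commutation relation [S,T] = 1_D. Then for every ξ ∈ D with ‖ξ‖ = 1 and all z, w ∈ ℂ: 1 ≤ 2·max{‖Sξ − zξ‖, ‖S†ξ − z̄ξ‖}·max{‖Tξ − wξ‖, ‖T†ξ − w̄ξ‖}, i.e. ⟨ξ,ξ⟩ ≤ 2·max{(ΔS)_ξ(z), (ΔS†)_ξ(z̄)}·max{(ΔT)_ξ(w), (ΔT†)_ξ(w̄)}. -/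
/- STATEMENT 11: If S,T ∈ L†(D,H) satisfy [S,T] = 1_D weakly, then for every unit
vector ξ ∈ D and all z, w ∈ ℂ:
1 ≤ 2·max{‖Sξ − zξ‖, ‖S†ξ − z̄ξ‖}·max{‖Tξ − wξ‖, ‖T†ξ − w̄ξ‖}. -/
theorem uncertainty_relation_UR1
    {H : Type*} [NormedAddCommGroup H] [InnerProductSpace ℂ H]
    (D : Submodule ℂ H) (hD : Dense (D : Set H))
    (S Sd T Td : D →ₗ[ℂ] H)
    (hS : ∀ ξ η : D, (inner ℂ (S ξ) (η : H) : ℂ) = inner ℂ (ξ : H) (Sd η))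
    (hT : ∀ ξ η : D, (inner ℂ (T ξ) (η : H) : ℂ) = inner ℂ (ξ : H) (Td η))
    (hCR : ∀ ξ η : D,
      (inner ℂ (T ξ) (Sd η) : ℂ) - (inner ℂ (S ξ) (Td η) : ℂ) = (inner ℂ (ξ : H) (η : H) : ℂ)) :
    ∀ ξ : D, ‖(ξ : H)‖ = 1 → ∀ z w : ℂ,
      (1 : ℝ) ≤ 2 * max ‖S ξ - z • (ξ : H)‖ ‖Sd ξ - (starRingEnd ℂ) z • (ξ : H)‖
        * max ‖T ξ - w • (ξ : H)‖ ‖Td ξ - (starRingEnd ℂ) w • (ξ : H)‖ := by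
  intro ξ hξ z w
  set A : H := S ξ - z • (ξ : H) with hA
  set Ad : H := Sd ξ - (starRingEnd ℂ) z • (ξ : H) with hAd
  set B : H := T ξ - w • (ξ : H) with hB
  set Bd : H := Td ξ - (starRingEnd ℂ) w • (ξ : H) with hBd
  have hself : (inner ℂ (ξ : H) (ξ : H) : ℂ) = 1 := by
    rw [inner_self_eq_norm_sq_to_K, hξ]; norm_num
  have key : (inner ℂ B Ad : ℂ) - inner ℂ A Bd = 1 := by
    rw [hA, hAd, hB, hBd]
    simp only [inner_sub_left, inner_sub_right, inner_smul_left, inner_smul_right,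
      starRingEnd_self_apply]
    have h1 := hCR ξ ξ
    rw [hself] at h1
    have h2 := hT ξ ξ
    have h3 := hS ξ ξ
    linear_combination h1 - (starRingEnd ℂ) z * h2 + (starRingEnd ℂ) w * h3
  have hnorm : (1 : ℝ) ≤ ‖B‖ * ‖Ad‖ + ‖A‖ * ‖Bd‖ := by
    calc (1 : ℝ) = ‖(inner ℂ B Ad : ℂ) - inner ℂ A Bd‖ := by rw [key]; simp
    _ ≤ ‖(inner ℂ B Ad : ℂ)‖ + ‖(inner ℂ A Bd : ℂ)‖ := norm_sub_le _ _
    _ ≤ ‖B‖ * ‖Ad‖ + ‖A‖ * ‖Bd‖ :=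
        add_le_add (norm_inner_le_norm _ _) (norm_inner_le_norm _ _)
  have h1 : ‖B‖ * ‖Ad‖ ≤ max ‖A‖ ‖Ad‖ * max ‖B‖ ‖Bd‖ := by
    rw [mul_comm]
    exact mul_le_mul (le_max_right _ _) (le_max_left _ _) (norm_nonneg _)
      (le_trans (norm_nonneg _) (le_max_left _ _))
  have h2 : ‖A‖ * ‖Bd‖ ≤ max ‖A‖ ‖Ad‖ * max ‖B‖ ‖Bd‖ :=
    mul_le_mul (le_max_left _ _) (le_max_right _ _) (norm_nonneg _)
      (le_trans (norm_nonneg _) (le_max_left _ _))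
  nlinarith [hnorm, h1, h2]
end

section
/- Let S, T ∈ L†(D,H) satisfy the weak commutation relation [S,T] = 1_D, and assume in addition that [S†,T] − [S,T†] = 0 in weak sense, i.e. ⟨Tξ, Sη⟩ − ⟨S†ξ, T†η⟩ = ⟨T†ξ, S†η⟩ − ⟨Sξ, Tη⟩ for all ξ, η ∈ D. Then for every φ ∈ D with ‖φ‖ = 1: ((ΔS)_φ + (ΔS†)_φ)·((ΔT)_φ + (ΔT†)_φ) ≥ 1. -/
/-- The uncertainty (ΔA)_φ = (‖Aφ‖² − |⟨Aφ, φ⟩|²)^{1/2} of an operator A ∈ L†(D,H) in the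
state φ ∈ D. -/
noncomputable def uncertainty {H : Type*} [NormedAddCommGroup H] [InnerProductSpace ℂ H]
    {D : Submodule ℂ H} (A : D →ₗ[ℂ] H) (φ : D) : ℝ :=
  Real.sqrt (‖A φ‖ ^ 2 - ‖(inner ℂ (A φ) (φ : H) : ℂ)‖ ^ 2)

lemma uncertainty_eq_norm {H : Type*} [NormedAddCommGroup H] [InnerProductSpace ℂ H]
    {D : Submodule ℂ H} (A : D →ₗ[ℂ] H) (φ : D) (hφ : ‖(φ : H)‖ = 1) :
    uncertainty A φ
      = ‖A φ - (starRingEnd ℂ) ((inner ℂ (A φ) (φ : H) : ℂ)) • (φ : H)‖ := by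
  unfold uncertainty
  have h : ‖A φ - (starRingEnd ℂ) ((inner ℂ (A φ) (φ : H) : ℂ)) • (φ : H)‖ ^ 2
      = ‖A φ‖ ^ 2 - ‖(inner ℂ (A φ) (φ : H) : ℂ)‖ ^ 2 := by
    set c : ℂ := (inner ℂ (A φ) (φ : H) : ℂ) with hc
    have hcc : (starRingEnd ℂ) c * c = ((‖c‖ ^ 2 : ℝ) : ℂ) := by
      rw [mul_comm, Complex.mul_conj, Complex.sq_norm]
    rw [@norm_sub_sq ℂ, inner_smul_right, ← hc, hcc, norm_smul, hφ]
    simp [Complex.norm_conj, ← Complex.ofReal_pow]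
    ring
  rw [← h, Real.sqrt_sq (norm_nonneg _)]

theorem uncertainty_relation_UR2
    {H : Type*} [NormedAddCommGroup H] [InnerProductSpace ℂ H]
    (D : Submodule ℂ H) (hD : Dense (D : Set H))
    (S Sd T Td : D →ₗ[ℂ] H)
    (hS : ∀ ξ η : D, (inner ℂ (S ξ) (η : H) : ℂ) = inner ℂ (ξ : H) (Sd η))
    (hT : ∀ ξ η : D, (inner ℂ (T ξ) (η : H) : ℂ) = inner ℂ (ξ : H) (Td η))
    (hCR : ∀ ξ η : D,
      (inner ℂ (T ξ) (Sd η) : ℂ) - (inner ℂ (S ξ) (Td η) : ℂ) = (inner ℂ (ξ : H) (η : H) : ℂ))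
    -- [S†,T] − [S,T†] = 0 in weak sense
    (hsym : ∀ ξ η : D,
      (inner ℂ (T ξ) (S η) : ℂ) - (inner ℂ (Sd ξ) (Td η) : ℂ)
        = (inner ℂ (Td ξ) (Sd η) : ℂ) - (inner ℂ (S ξ) (T η) : ℂ)) :
    ∀ φ : D, ‖(φ : H)‖ = 1 →
      (uncertainty S φ + uncertainty Sd φ) * (uncertainty T φ + uncertainty Td φ) ≥ 1 := by
  intro φ hφ
  set a : ℂ := (inner ℂ (S φ) (φ : H) : ℂ) with ha
  set ad : ℂ := (inner ℂ (Sd φ) (φ : H) : ℂ) with had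
  set b : ℂ := (inner ℂ (T φ) (φ : H) : ℂ) with hb
  set bd : ℂ := (inner ℂ (Td φ) (φ : H) : ℂ) with hbd
  set s : H := S φ - (starRingEnd ℂ) a • (φ : H) with hs'
  set sd : H := Sd φ - (starRingEnd ℂ) ad • (φ : H) with hsd'
  set t : H := T φ - (starRingEnd ℂ) b • (φ : H) with ht'
  set td : H := Td φ - (starRingEnd ℂ) bd • (φ : H) with htd'
  have hφφ : (inner ℂ (φ : H) (φ : H) : ℂ) = 1 := by
    rw [inner_self_eq_norm_sq_to_K, hφ]; norm_num
  -- conjugate relations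
  have hads : (starRingEnd ℂ) ad = a := by
    rw [ha, hS φ φ, had, ← inner_conj_symm]; simp
  have hbds : (starRingEnd ℂ) bd = b := by
    rw [hb, hT φ φ, hbd, ← inner_conj_symm]; simp
  have hinφSd : (inner ℂ (φ : H) (Sd φ) : ℂ) = (starRingEnd ℂ) ad := by
    rw [← inner_conj_symm, had]
  have hinφTd : (inner ℂ (φ : H) (Td φ) : ℂ) = (starRingEnd ℂ) bd := by
    rw [← inner_conj_symm, hbd]
  -- the key identity
  have key : (inner ℂ t sd : ℂ) - (inner ℂ s td : ℂ) = 1 := by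
    rw [hs', hsd', ht', htd']
    simp only [inner_sub_left, inner_sub_right, inner_smul_left, inner_smul_right,
      RingHom.map_mul, starRingEnd_self_apply, hφφ, mul_one]
    rw [hinφSd, hinφTd, ← hb, ← ha]
    have := hCR φ φ
    rw [hφφ] at this
    rw [hads, hbds]
    linear_combination this
  -- Cauchy–Schwarz bound
  have h1 : (1 : ℝ) ≤ ‖t‖ * ‖sd‖ + ‖s‖ * ‖td‖ := by
    have e1 : (1 : ℝ) = ‖(inner ℂ t sd : ℂ) - (inner ℂ s td : ℂ)‖ := by
      rw [key]; norm_num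
    calc (1 : ℝ) = ‖(inner ℂ t sd : ℂ) - (inner ℂ s td : ℂ)‖ := e1
      _ ≤ ‖(inner ℂ t sd : ℂ)‖ + ‖(inner ℂ s td : ℂ)‖ := norm_sub_le _ _
      _ ≤ ‖t‖ * ‖sd‖ + ‖s‖ * ‖td‖ := by
          gcongr <;> exact norm_inner_le_norm _ _
  have hUS : uncertainty S φ = ‖s‖ := uncertainty_eq_norm S φ hφ
  have hUSd : uncertainty Sd φ = ‖sd‖ := uncertainty_eq_norm Sd φ hφ
  have hUT : uncertainty T φ = ‖t‖ := uncertainty_eq_norm T φ hφ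
  have hUTd : uncertainty Td φ = ‖td‖ := uncertainty_eq_norm Td φ hφ
  rw [hUS, hUSd, hUT, hUTd]
  nlinarith [norm_nonneg s, norm_nonneg sd, norm_nonneg t, norm_nonneg td, h1]
end

section
/- Let S, T, C ∈ L†(D,H) satisfy the weak commutation relation [S,T] = C, i.e. ⟨Tξ, S†η⟩ − ⟨Sξ, T†η⟩ = ⟨Cξ, η⟩ for all ξ, η ∈ D. Then for every φ ∈ D with ‖φ‖ = 1: max{(ΔS)_φ, (ΔS†)_φ}·max{(ΔT)_φ, (ΔT†)_φ} ≥ |⟨φ, Cφ⟩|/2. -/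
/- STATEMENT 13: If S,T,C ∈ L†(D,H) satisfy the weak commutation relation [S,T] = C, then
for every unit φ ∈ D: max{(ΔS)_φ, (ΔS†)_φ}·max{(ΔT)_φ, (ΔT†)_φ} ≥ |⟨φ, Cφ⟩|/2. -/
theorem uncertainty_relation_UR1_general
    {H : Type*} [NormedAddCommGroup H] [InnerProductSpace ℂ H]
    (D : Submodule ℂ H) (hD : Dense (D : Set H))
    (S Sd T Td C Cd : D →ₗ[ℂ] H)
    (hS : ∀ ξ η : D, (inner ℂ (S ξ) (η : H) : ℂ) = inner ℂ (ξ : H) (Sd η))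
    (hT : ∀ ξ η : D, (inner ℂ (T ξ) (η : H) : ℂ) = inner ℂ (ξ : H) (Td η))
    (hC : ∀ ξ η : D, (inner ℂ (C ξ) (η : H) : ℂ) = inner ℂ (ξ : H) (Cd η))
    -- weak commutation relation [S,T] = C
    (hCR : ∀ ξ η : D,
      (inner ℂ (T ξ) (Sd η) : ℂ) - (inner ℂ (S ξ) (Td η) : ℂ) = (inner ℂ (C ξ) (η : H) : ℂ)) :
    ∀ φ : D, ‖(φ : H)‖ = 1 →
      max (uncertainty S φ) (uncertainty Sd φ) * max (uncertainty T φ) (uncertainty Td φ)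
        ≥ ‖(inner ℂ ((φ : H)) (C φ) : ℂ)‖ / 2 := by
  intro φ hφ
  have hφ1 : (inner ℂ (φ : H) (φ : H) : ℂ) = 1 := by
    rw [inner_self_eq_norm_sq_to_K, hφ]; norm_num
  -- projection onto orthogonal complement of φ
  set P : H → H := fun x => x - (inner ℂ (φ : H) x : ℂ) • (φ : H) with hP
  -- ‖P x‖² = ‖x‖² - |⟨x,φ⟩|²
  have habs2 : ∀ x y : H, ‖(inner ℂ x y : ℂ)‖ = ‖(inner ℂ y x : ℂ)‖ := by
    intro x y
    rw [← inner_conj_symm x y]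
    exact Complex.norm_conj _
  -- ‖P x‖² = ‖x‖² - |⟨x,φ⟩|²
  have hnorm : ∀ x : H, ‖P x‖ ^ 2 = ‖x‖ ^ 2 - (‖(inner ℂ x (φ : H) : ℂ)‖) ^ 2 := by
    intro x
    have h1 := norm_sub_sq (𝕜 := ℂ) x ((inner ℂ (φ : H) x : ℂ) • (φ : H))
    have hre : ∀ z : ℂ, (z * (starRingEnd ℂ) z).re = ‖(starRingEnd ℂ) z‖ ^ 2 := by
      intro z
      rw [Complex.mul_conj]
      simp [Complex.sq_norm, Complex.norm_conj]
    have h3 : RCLike.re ((inner ℂ x ((inner ℂ (φ : H) x : ℂ) • (φ : H)) : ℂ))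
        = (‖(inner ℂ x (φ : H) : ℂ)‖) ^ 2 := by
      rw [inner_smul_right, ← inner_conj_symm x (φ : H)]
      exact hre _
    have h4 : ‖(inner ℂ (φ : H) x : ℂ) • (φ : H)‖ ^ 2
        = (‖(inner ℂ x (φ : H) : ℂ)‖) ^ 2 := by
      rw [norm_smul, hφ, mul_one, habs2]
    rw [hP]
    simp only
    rw [h1, h3, h4]
    ring
  -- inner products of projections
  have hinner : ∀ x y : H, (inner ℂ (P x) (P y) : ℂ)
      = inner ℂ x y - (inner ℂ x (φ : H) : ℂ) * (inner ℂ (φ : H) y : ℂ) := by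
    intro x y
    simp only [hP, inner_sub_left, inner_sub_right, inner_smul_left, inner_smul_right, hφ1]
    rw [← inner_conj_symm x (φ : H)]
    ring_nf
  -- uncertainties as norms
  have huS : uncertainty S φ = ‖P (S φ)‖ := by
    rw [uncertainty, ← hnorm, Real.sqrt_sq (norm_nonneg _)]
  have huSd : uncertainty Sd φ = ‖P (Sd φ)‖ := by
    rw [uncertainty, ← hnorm, Real.sqrt_sq (norm_nonneg _)]
  have huT : uncertainty T φ = ‖P (T φ)‖ := by
    rw [uncertainty, ← hnorm, Real.sqrt_sq (norm_nonneg _)]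
  have huTd : uncertainty Td φ = ‖P (Td φ)‖ := by
    rw [uncertainty, ← hnorm, Real.sqrt_sq (norm_nonneg _)]
  -- the key identity
  have key : (inner ℂ (P (T φ)) (P (Sd φ)) : ℂ) - inner ℂ (P (S φ)) (P (Td φ))
      = inner ℂ (C φ) ((φ : H)) := by
    rw [hinner, hinner, ← hCR φ φ]
    have e1 : (inner ℂ ((φ : H)) (Sd φ) : ℂ) = inner ℂ (S φ) ((φ : H)) := (hS φ φ).symm
    have e2 : (inner ℂ ((φ : H)) (Td φ) : ℂ) = inner ℂ (T φ) ((φ : H)) := (hT φ φ).symm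
    rw [e1, e2]
    ring
  -- bound
  have hCbound : ‖(inner ℂ (C φ) ((φ : H)) : ℂ)‖
      ≤ ‖P (T φ)‖ * ‖P (Sd φ)‖ + ‖P (S φ)‖ * ‖P (Td φ)‖ := by
    rw [← key]
    calc ‖(inner ℂ (P (T φ)) (P (Sd φ)) : ℂ) - inner ℂ (P (S φ)) (P (Td φ))‖
        ≤ ‖(inner ℂ (P (T φ)) (P (Sd φ)) : ℂ)‖
          + ‖(inner ℂ (P (S φ)) (P (Td φ)) : ℂ)‖ := by
          exact norm_sub_le _ _
      _ ≤ ‖P (T φ)‖ * ‖P (Sd φ)‖ + ‖P (S φ)‖ * ‖P (Td φ)‖ := by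
          exact add_le_add (norm_inner_le_norm _ _) (norm_inner_le_norm _ _)
  have habs : ‖(inner ℂ ((φ : H)) (C φ) : ℂ)‖
      = ‖(inner ℂ (C φ) ((φ : H)) : ℂ)‖ := by
    rw [← inner_conj_symm ((φ : H)) (C φ)]
    exact Complex.norm_conj _
  set M1 := max (uncertainty S φ) (uncertainty Sd φ) with hM1
  set M2 := max (uncertainty T φ) (uncertainty Td φ) with hM2
  have hM1nn : 0 ≤ M1 := le_trans (Real.sqrt_nonneg _) (le_max_left _ _)
  have hM2nn : 0 ≤ M2 := le_trans (Real.sqrt_nonneg _) (le_max_left _ _)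
  have b1 : ‖P (T φ)‖ * ‖P (Sd φ)‖ ≤ M2 * M1 := by
    apply mul_le_mul (by rw [← huT]; exact le_max_left _ _)
      (by rw [← huSd]; exact le_max_right _ _) (norm_nonneg _) hM2nn
  have b2 : ‖P (S φ)‖ * ‖P (Td φ)‖ ≤ M1 * M2 := by
    apply mul_le_mul (by rw [← huS]; exact le_max_left _ _)
      (by rw [← huTd]; exact le_max_right _ _) (norm_nonneg _) hM1nn
  have : ‖(inner ℂ ((φ : H)) (C φ) : ℂ)‖ ≤ 2 * (M1 * M2) := by
    rw [habs]
    calc ‖(inner ℂ (C φ) ((φ : H)) : ℂ)‖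
        ≤ ‖P (T φ)‖ * ‖P (Sd φ)‖ + ‖P (S φ)‖ * ‖P (Td φ)‖ := hCbound
      _ ≤ M2 * M1 + M1 * M2 := add_le_add b1 b2
      _ = 2 * (M1 * M2) := by ring
  linarith
end

section
/- Let S, T ∈ L†(D,H) satisfy the weak commutation relation [S,T] = 1_D, and assume S* = closure(S†) and T* = closure(T†) (equality of densely defined operators in H, where S, S†, T, T† have domain D). Let n ≥ 1 and suppose that for every ξ ∈ D and every k with 1 ≤ k ≤ n: ξ ∈ D(S̄^k) ∩ D((S*)^k), S̄^k ξ ∈ D(T̄), and (S*)^k ξ ∈ D(T*). Then for every ξ ∈ D and every k with 1 ≤ k ≤ n: Tξ ∈ D(S̄^k) with S̄^k Tξ = T̄ S̄^k ξ + k S̄^{k−1} ξ, and T†ξ ∈ D((S*)^k) with (S*)^k T†ξ = T* (S*)^k ξ − k (S*)^{k−1} ξ. -/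
/-- The partial operator `H →ₗ.[ℂ] H` with domain `D` given by a linear map `S : D →ₗ[ℂ] H`. -/
def LinearMap.toPMapOn {H : Type*} [NormedAddCommGroup H] [InnerProductSpace ℂ H]
    (D : Submodule ℂ H) (S : D →ₗ[ℂ] H) : H →ₗ.[ℂ] H :=
  ⟨D, S⟩

/-- `IterMem X k ξ v` means: `ξ ∈ D(X^k)` and `X^k ξ = v`, for a partial operator `X`,
expressed through the chain `ξ = u 0, u 1 = X u 0, …, u k = X u (k-1) = v` with each
`u j` (j < k) in the domain of `X`. -/
def IterMem {H : Type*} [NormedAddCommGroup H] [InnerProductSpace ℂ H]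
    (X : H →ₗ.[ℂ] H) (k : ℕ) (ξ v : H) : Prop :=
  ∃ u : ℕ → H, u 0 = ξ ∧ u k = v ∧ ∀ j < k, ∃ h : u j ∈ X.domain, X ⟨u j, h⟩ = u (j + 1)


open scoped ComplexConjugate
open LinearPMap Filter Topology

set_option linter.unusedSectionVars false
set_option maxHeartbeats 1000000

noncomputable section
namespace St17

variable {H : Type*} [NormedAddCommGroup H] [InnerProductSpace ℂ H] [CompleteSpace H]

local notation "⟪" x ", " y "⟫" => @inner ℂ _ _ x y


variable {H : Type*} [NormedAddCommGroup H] [InnerProductSpace ℂ H] [CompleteSpace H]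








theorem iterMem_zero (X : H →ₗ.[ℂ] H) (ξ : H) : IterMem X 0 ξ ξ :=
  ⟨fun _ => ξ, rfl, rfl, fun j hj => absurd hj (Nat.not_lt_zero j)⟩

theorem iterMem_zero_eq {X : H →ₗ.[ℂ] H} {ξ v : H} (h : IterMem X 0 ξ v) : v = ξ := by
  obtain ⟨u, h0, hk, -⟩ := h
  rw [← hk, h0]

theorem iterMem_unique {X : H →ₗ.[ℂ] H} {k : ℕ} {ξ a b : H}
    (ha : IterMem X k ξ a) (hb : IterMem X k ξ b) : a = b := by
  obtain ⟨u, hu0, huk, hu⟩ := ha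
  obtain ⟨v, hv0, hvk, hv⟩ := hb
  have key : ∀ j, j ≤ k → u j = v j := by
    intro j
    induction j with
    | zero => intro _; rw [hu0, hv0]
    | succ j ih =>
      intro hj
      have hjk : j < k := by omega
      have hje : u j = v j := ih (by omega)
      obtain ⟨h1, e1⟩ := hu j hjk
      obtain ⟨h2, e2⟩ := hv j hjk
      rw [← e1, ← e2]
      congr 1
      exact Subtype.ext hje
  rw [← huk, ← hvk, key k le_rfl]

theorem iterMem_succ {X : H →ₗ.[ℂ] H} {k : ℕ} {ξ a w : H}
    (h : IterMem X k ξ a) (ha : a ∈ X.domain) (hw : X ⟨a, ha⟩ = w) :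
    IterMem X (k + 1) ξ w := by
  obtain ⟨u, hu0, huk, hu⟩ := h
  refine ⟨fun j => if j = k + 1 then w else u j, by simp [hu0], by simp, ?_⟩
  intro j hj
  rcases Nat.lt_or_ge j k with hjk | hjk
  · obtain ⟨h1, e1⟩ := hu j hjk
    simp only [if_neg (show j ≠ k + 1 by omega), if_neg (show j + 1 ≠ k + 1 by omega)]
    exact ⟨h1, e1⟩
  · have hjek : j = k := by omega
    subst hjek
    simp only [if_neg (show j ≠ j + 1 by omega), if_pos rfl, huk]
    exact ⟨ha, hw⟩

theorem iterMem_succ_elim {X : H →ₗ.[ℂ] H} {k : ℕ} {ξ a : H}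
    (h : IterMem X (k + 1) ξ a) :
    ∃ (b : H) (hb : b ∈ X.domain), IterMem X k ξ b ∧ X ⟨b, hb⟩ = a := by
  obtain ⟨u, hu0, huk, hu⟩ := h
  obtain ⟨h1, e1⟩ := hu k (by omega)
  exact ⟨u k, h1, ⟨u, hu0, rfl, fun j hj => hu j (by omega)⟩, by rw [e1, huk]⟩







/-- Sequence approximation from the closure. -/
theorem closure_seq (X : H →ₗ.[ℂ] H) (hc : X.IsClosable) (u : X.closure.domain) :
    ∃ f : ℕ → X.domain,
      Tendsto (fun m => ((f m : H), X (f m))) atTop (𝓝 ((u : H), X.closure u)) := by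
  have hmem : ((u : H), X.closure u) ∈ (X.graph.topologicalClosure : Set (H × H)) := by
    rw [hc.graph_closure_eq_closure_graph]
    exact X.closure.mem_graph u
  rw [Submodule.topologicalClosure_coe] at hmem
  obtain ⟨g, hg, hgt⟩ := mem_closure_iff_seq_limit.1 hmem
  choose x hx1 hx2 using fun m => (X.mem_graph_iff.1 (hg m))
  refine ⟨x, ?_⟩
  have : (fun m => ((x m : H), X (x m))) = g := by
    funext m
    rw [hx1 m, hx2 m]
  rw [this]
  exact hgt

/-- Pairing between the adjoint and the closure. -/
theorem closure_pairing (X : H →ₗ.[ℂ] H) (hX : Dense (X.domain : Set H))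
    (hc : X.IsClosable) (y : X.adjoint.domain) (u : X.closure.domain) :
    ⟪X.adjoint y, (u : H)⟫ = ⟪(y : H), X.closure u⟫ := by
  obtain ⟨f, hf⟩ := closure_seq X hc u
  have h1 : Tendsto (fun m => ⟪X.adjoint y, ((f m : H))⟫) atTop (𝓝 ⟪X.adjoint y, (u : H)⟫) :=
    (tendsto_const_nhds.inner ((continuous_fst.tendsto _).comp hf))
  have h2 : Tendsto (fun m => ⟪(y : H), X (f m)⟫) atTop (𝓝 ⟪(y : H), X.closure u⟫) :=
    (tendsto_const_nhds.inner ((continuous_snd.tendsto _).comp hf))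
  have heq : (fun m => ⟪X.adjoint y, ((f m : H))⟫) = fun m => ⟪(y : H), X (f m)⟫ := by
    funext m
    exact (X.adjoint_isFormalAdjoint hX) y (f m)
  rw [heq] at h1
  exact tendsto_nhds_unique h1 h2

/-- The adjoint of a densely defined operator is closed. -/
theorem adjoint_isClosed (X : H →ₗ.[ℂ] H) (hX : Dense (X.domain : Set H)) :
    X.adjoint.IsClosed := by
  have hset : (X.adjoint.graph : Set (H × H)) =
      ⋂ x : X.domain, {p : H × H | ⟪p.2, (x : H)⟫ = ⟪p.1, X x⟫} := by
    ext p
    simp only [SetLike.mem_coe, Set.mem_iInter, Set.mem_setOf_eq]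
    constructor
    · intro hp x
      rw [X.adjoint.mem_graph_iff] at hp
      obtain ⟨y, hy1, hy2⟩ := hp
      rw [← hy1, ← hy2]
      exact (X.adjoint_isFormalAdjoint hX) y x
    · intro hp
      have hmem : p.1 ∈ X.adjoint.domain :=
        X.mem_adjoint_domain_of_exists p.1 ⟨p.2, fun x => hp x⟩
      have happ : X.adjoint ⟨p.1, hmem⟩ = p.2 :=
        adjoint_apply_eq hX ⟨p.1, hmem⟩ (fun x => hp x)
      rw [X.adjoint.mem_graph_iff]
      exact ⟨⟨p.1, hmem⟩, rfl, happ⟩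
  rw [LinearPMap.IsClosed, hset]
  exact isClosed_iInter fun x =>
    isClosed_eq (Continuous.inner continuous_snd continuous_const)
      (Continuous.inner continuous_fst continuous_const)

/-- Minimality of the closure. -/
theorem closure_le_of_isClosed {f g : H →ₗ.[ℂ] H} (h : f ≤ g) (hg : g.IsClosed) :
    f.closure ≤ g := by
  have h1 : f.closure ≤ g.closure := hg.isClosable.closure_mono h
  have h2 : g.closure ≤ g := by
    apply le_of_le_graph
    rw [← hg.isClosable.graph_closure_eq_closure_graph]
    exact g.graph.topologicalClosure_minimal le_rfl hg
  exact h1.trans h2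

/-- The adjoint is contained in the adjoint of the closure. -/
theorem adjoint_le_closure_adjoint (X : H →ₗ.[ℂ] H) (hX : Dense (X.domain : Set H))
    (hc : X.IsClosable) : X.adjoint ≤ X.closure.adjoint := by
  have hXc : Dense (X.closure.domain : Set H) := hX.mono (X.le_closure.1)
  constructor
  · intro y hy
    exact X.closure.mem_adjoint_domain_of_exists y
      ⟨X.adjoint ⟨y, hy⟩, fun u => closure_pairing X hX hc ⟨y, hy⟩ u⟩
  · intro x y hxy
    refine (adjoint_apply_eq hXc y (x₀ := X.adjoint x) fun u => ?_).symm
    rw [← hxy]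
    exact closure_pairing X hX hc x u







/-- The double adjoint is contained in the closure. -/
theorem adjoint_adjoint_le_closure (X : H →ₗ.[ℂ] H) (hX : Dense (X.domain : Set H))
    (hX' : Dense (X.adjoint.domain : Set H)) (hc : X.IsClosable) :
    X.adjoint.adjoint ≤ X.closure := by
  apply le_of_le_graph
  intro p hp
  rw [← hc.graph_closure_eq_closure_graph]
  obtain ⟨y, hy1, hy2⟩ := X.adjoint.adjoint.mem_graph_iff.1 hp
  -- work in the L2 product space
  set W := WithLp 2 (H × H)
  let e : W ≃L[ℂ] H × H := WithLp.prodContinuousLinearEquiv 2 ℂ H H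
  let M : Submodule ℂ W :=
    (X.graph.topologicalClosure).comap (e.toLinearEquiv : W →ₗ[ℂ] H × H)
  have hMclosed : IsClosed (M : Set W) := by
    have : (M : Set W) = (e : W → H × H) ⁻¹' (X.graph.topologicalClosure : Set (H × H)) := rfl
    rw [this]
    exact (X.graph.isClosed_topologicalClosure).preimage e.continuous
  haveI : CompleteSpace M := hMclosed.completeSpace_coe
  have hMM : Mᗮᗮ = M := Submodule.orthogonal_orthogonal M
  have hin : ∀ x : X.domain, (e.symm ((x : H), X x)) ∈ M := by
    intro x
    show e (e.symm _) ∈ X.graph.topologicalClosure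
    rw [e.apply_symm_apply]
    exact X.graph.le_topologicalClosure (X.mem_graph x)
  have hpM : e.symm p ∈ M := by
    rw [← hMM, Submodule.mem_orthogonal]
    intro u hu
    -- u.snd is in the adjoint domain with value -u.fst
    have hu0 : ∀ x : X.domain, ⟪(x : H), (WithLp.equiv 2 (H × H) u).1⟫
        + ⟪X x, (WithLp.equiv 2 (H × H) u).2⟫ = 0 := by
      intro x
      have := hu _ (hin x)
      rw [WithLp.prod_inner_apply] at this
      exact this
    have hb : ∀ x : X.domain, ⟪-(WithLp.equiv 2 (H × H) u).1, (x : H)⟫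
        = ⟪(WithLp.equiv 2 (H × H) u).2, X x⟫ := by
      intro x
      have h0 := hu0 x
      have : ⟪X x, (WithLp.equiv 2 (H × H) u).2⟫ = -⟪(x : H), (WithLp.equiv 2 (H × H) u).1⟫ := by
        linear_combination h0
      calc ⟪-(WithLp.equiv 2 (H × H) u).1, (x : H)⟫
          = conj ⟪(x : H), -(WithLp.equiv 2 (H × H) u).1⟫ := (inner_conj_symm _ _).symm
        _ = conj ⟪X x, (WithLp.equiv 2 (H × H) u).2⟫ := by rw [inner_neg_right, this]
        _ = ⟪(WithLp.equiv 2 (H × H) u).2, X x⟫ := inner_conj_symm _ _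
    have hmem : (WithLp.equiv 2 (H × H) u).2 ∈ X.adjoint.domain :=
      X.mem_adjoint_domain_of_exists _ ⟨-(WithLp.equiv 2 (H × H) u).1, hb⟩
    have happ : X.adjoint ⟨(WithLp.equiv 2 (H × H) u).2, hmem⟩ = -(WithLp.equiv 2 (H × H) u).1 :=
      adjoint_apply_eq hX _ hb
    -- now compute the inner product
    have h2 : ⟪(WithLp.equiv 2 (H × H) u).2, p.2⟫ = -⟪(WithLp.equiv 2 (H × H) u).1, p.1⟫ := by
      rw [← hy2, ← hy1]
      calc ⟪(WithLp.equiv 2 (H × H) u).2, X.adjoint.adjoint y⟫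
          = conj ⟪X.adjoint.adjoint y, (WithLp.equiv 2 (H × H) u).2⟫ := (inner_conj_symm _ _).symm
        _ = conj ⟪(y : H), X.adjoint ⟨(WithLp.equiv 2 (H × H) u).2, hmem⟩⟫ := by
            rw [(X.adjoint.adjoint_isFormalAdjoint hX') y ⟨_, hmem⟩]
        _ = conj ⟪(y : H), -(WithLp.equiv 2 (H × H) u).1⟫ := by rw [happ]
        _ = -⟪(WithLp.equiv 2 (H × H) u).1, (y : H)⟫ := by
            simp [inner_conj_symm]
    show ⟪(WithLp.equiv 2 (H × H) u).1, p.1⟫ + ⟪(WithLp.equiv 2 (H × H) u).2, p.2⟫ = 0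
    rw [h2]
    ring
  have hfin : (e : W → H × H) (e.symm p) ∈ X.graph.topologicalClosure := hpM
  rwa [e.apply_symm_apply] at hfin







open _root_.LinearMap (toPMapOn)

theorem le_apply {f g : H →ₗ.[ℂ] H} (h : f ≤ g) (x : f.domain) (hx : (x : H) ∈ g.domain) :
    g ⟨(x : H), hx⟩ = f x := (h.2 rfl).symm

section basic

variable (D : Submodule ℂ H) (hD : Dense (D : Set H)) (A Ad : D →ₗ[ℂ] H)
  (hA : ∀ ξ η : D, ⟪A ξ, (η : H)⟫ = ⟪(ξ : H), Ad η⟫)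

include hA

theorem fa1 : (toPMapOn D A).IsFormalAdjoint (toPMapOn D Ad) := fun x y => hA x y

theorem fa2 : (toPMapOn D Ad).IsFormalAdjoint (toPMapOn D A) := by
  intro x y
  calc ⟪Ad x, (y : H)⟫ = conj ⟪(y : H), Ad x⟫ := (inner_conj_symm _ _).symm
    _ = conj ⟪A y, (x : H)⟫ := congrArg (starRingEnd ℂ) (hA y x).symm
    _ = ⟪(x : H), A y⟫ := inner_conj_symm _ _

include hD

theorem fd_le : toPMapOn D Ad ≤ (toPMapOn D A).adjoint :=
  (fa1 D A Ad hA).le_adjoint hD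

theorem cl1 : (toPMapOn D A).IsClosable :=
  ((adjoint_isClosed (toPMapOn D Ad) hD).isClosable).leIsClosable
    ((fa2 D A Ad hA).le_adjoint hD)

theorem memAdj (η : D) : (η : H) ∈ (toPMapOn D A).adjoint.domain :=
  (fd_le D hD A Ad hA).1 η.2

theorem adjApply (η : D) :
    (toPMapOn D A).adjoint ⟨(η : H), memAdj D hD A Ad hA η⟩ = Ad η :=
  le_apply (fd_le D hD A Ad hA) η _

/-- pairing : `⟪Ad η, u⟫ = ⟪η, 𝒜 u⟫` for `u` in the domain of the closure `𝒜`. -/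
theorem pair1 (η : D) (u : (toPMapOn D A).closure.domain) :
    ⟪Ad η, (u : H)⟫ = ⟪(η : H), (toPMapOn D A).closure u⟫ := by
  rw [← adjApply D hD A Ad hA η]
  exact closure_pairing _ hD (cl1 D hD A Ad hA) _ u

/-- conjugate pairing : `⟪𝒜 u, η⟫ = ⟪u, Ad η⟫`. -/
theorem pair2 (η : D) (u : (toPMapOn D A).closure.domain) :
    ⟪(toPMapOn D A).closure u, (η : H)⟫ = ⟪(u : H), Ad η⟫ := by
  calc ⟪(toPMapOn D A).closure u, (η : H)⟫
      = conj ⟪(η : H), (toPMapOn D A).closure u⟫ := (inner_conj_symm _ _).symm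
    _ = conj ⟪Ad η, (u : H)⟫ := by rw [pair1 D hD A Ad hA]
    _ = ⟪(u : H), Ad η⟫ := inner_conj_symm _ _

/-- membership creation through `E1`. -/
theorem mk_mem (E1 : (toPMapOn D Ad).adjoint ≤ (toPMapOn D A).closure)
    (v w : H) (h : ∀ η : D, ⟪w, (η : H)⟫ = ⟪v, Ad η⟫) :
    ∃ hv : v ∈ (toPMapOn D A).closure.domain, (toPMapOn D A).closure ⟨v, hv⟩ = w := by
  have hmem : v ∈ (toPMapOn D Ad).adjoint.domain :=
    (toPMapOn D Ad).mem_adjoint_domain_of_exists v ⟨w, fun x => h x⟩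
  have happ : (toPMapOn D Ad).adjoint ⟨v, hmem⟩ = w :=
    adjoint_apply_eq hD _ (fun x => h x)
  refine ⟨E1.1 hmem, ?_⟩
  rw [le_apply E1 ⟨v, hmem⟩ (E1.1 hmem), happ]

end basic


section key

variable (D : Submodule ℂ H) (hD : Dense (D : Set H)) (A Ad B Bd : D →ₗ[ℂ] H) (c : ℂ)
  (hA : ∀ ξ η : D, ⟪A ξ, (η : H)⟫ = ⟪(ξ : H), Ad η⟫)
  (hB : ∀ ξ η : D, ⟪B ξ, (η : H)⟫ = ⟪(ξ : H), Bd η⟫)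
  (hCR : ∀ ξ η : D, ⟪B ξ, Ad η⟫ - ⟪A ξ, Bd η⟫ = c * ⟪(ξ : H), (η : H)⟫)
  (hint : ∀ η : D, Ad η ∈ (toPMapOn D B).adjoint.domain)

include hD hA hB hCR hint in
/-- The commutation relation extended to the closures. -/
theorem star_comm (w : H) (hw1 : w ∈ (toPMapOn D A).closure.domain)
    (hw2 : w ∈ (toPMapOn D B).closure.domain) (η : D) :
    ⟪(toPMapOn D B).closure ⟨w, hw2⟩, Ad η⟫
      = ⟪(toPMapOn D A).closure ⟨w, hw1⟩, Bd η⟫ + c * ⟪w, (η : H)⟫ := by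
  set z : H := (toPMapOn D B).adjoint ⟨Ad η, hint η⟩ with hz
  obtain ⟨f, hf⟩ := closure_seq (toPMapOn D A) (cl1 D hD A Ad hA) ⟨w, hw1⟩
  have h1 : Tendsto (fun m => ((f m : H))) atTop (𝓝 w) := (continuous_fst.tendsto _).comp hf
  have h2 : Tendsto (fun m => A (f m)) atTop (𝓝 ((toPMapOn D A).closure ⟨w, hw1⟩)) :=
    (continuous_snd.tendsto _).comp hf
  have T : Tendsto (fun m => ⟪(f m : H), z⟫ - ⟪A (f m), Bd η⟫ - c * ⟪(f m : H), (η : H)⟫)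
      atTop (𝓝 (⟪w, z⟫ - ⟪(toPMapOn D A).closure ⟨w, hw1⟩, Bd η⟫ - c * ⟪w, (η : H)⟫)) :=
    ((h1.inner tendsto_const_nhds).sub (h2.inner tendsto_const_nhds)).sub
      ((h1.inner tendsto_const_nhds).const_mul c)
  have hm : ∀ m, ⟪(f m : H), z⟫ - ⟪A (f m), Bd η⟫ - c * ⟪(f m : H), (η : H)⟫ = 0 := by
    intro m
    have e1 : ⟪(f m : H), z⟫ = ⟪B (f m), Ad η⟫ := by
      calc ⟪(f m : H), z⟫ = conj ⟪z, (f m : H)⟫ := (inner_conj_symm _ _).symm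
        _ = conj ⟪Ad η, B (f m)⟫ := by
            rw [hz]
            exact congrArg (starRingEnd ℂ)
              (((toPMapOn D B).adjoint_isFormalAdjoint hD) ⟨Ad η, hint η⟩ (f m))
        _ = ⟪B (f m), Ad η⟫ := inner_conj_symm _ _
    rw [e1]
    linear_combination hCR (f m) η
  have heq : (fun m => ⟪(f m : H), z⟫ - ⟪A (f m), Bd η⟫ - c * ⟪(f m : H), (η : H)⟫)
      = fun _ => (0 : ℂ) := funext hm
  rw [heq] at T
  have hlim : ⟪w, z⟫ - ⟪(toPMapOn D A).closure ⟨w, hw1⟩, Bd η⟫ - c * ⟪w, (η : H)⟫ = 0 :=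
    (tendsto_nhds_unique tendsto_const_nhds T).symm
  have e2 : ⟪w, z⟫ = ⟪(toPMapOn D B).closure ⟨w, hw2⟩, Ad η⟫ := by
    calc ⟪w, z⟫ = conj ⟪z, w⟫ := (inner_conj_symm _ _).symm
      _ = conj ⟪Ad η, (toPMapOn D B).closure ⟨w, hw2⟩⟫ := by
          rw [hz, closure_pairing (toPMapOn D B) hD (cl1 D hD B Bd hB) ⟨Ad η, hint η⟩ ⟨w, hw2⟩]
      _ = ⟪(toPMapOn D B).closure ⟨w, hw2⟩, Ad η⟫ := inner_conj_symm _ _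
  linear_combination hlim - e2

include hD hA hB hCR hint in
theorem key (hcreal : conj c = c)
    (E1 : (toPMapOn D Ad).adjoint ≤ (toPMapOn D A).closure) (n : ℕ)
    (hdom : ∀ ξ : D, ∀ k : ℕ, 1 ≤ k → k ≤ n →
      ∃ a : H, IterMem (toPMapOn D A).closure k (ξ : H) a ∧
        a ∈ (toPMapOn D B).closure.domain) :
    ∀ k : ℕ, 1 ≤ k → k ≤ n → ∀ ξ : D, ∀ a b : H,
      IterMem (toPMapOn D A).closure k (ξ : H) a →
      IterMem (toPMapOn D A).closure (k - 1) (ξ : H) b →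
      ∀ ha : a ∈ (toPMapOn D B).closure.domain,
        IterMem (toPMapOn D A).closure k (B ξ)
          ((toPMapOn D B).closure ⟨a, ha⟩ + (c * k) • b) := by
  intro k
  induction k with
  | zero => omega
  | succ k ih =>
    intro _ hkn ξ a b hIa hIb ha
    obtain ⟨b1, hb1mem, hIb1, hb1val⟩ := iterMem_succ_elim hIa
    have hbb1 : b = b1 := iterMem_unique (by simpa using hIb) hIb1
    subst hbb1
    rcases Nat.eq_zero_or_pos k with hk0 | hkpos
    · -- base case k+1 = 1
      subst hk0
      have hbxi : b = (ξ : H) := iterMem_zero_eq hIb1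
      subst hbxi
      have haval : a = A ξ := by
        rw [← hb1val, le_apply (toPMapOn D A).le_closure ξ hb1mem]
        rfl
      obtain ⟨hv, hval⟩ := mk_mem D hD A Ad hA E1 (B ξ)
        ((toPMapOn D B).closure ⟨a, ha⟩ + (c * ((0 : ℕ) + 1 : ℕ)) • (ξ : H)) (by
        intro η
        have hco : ((⟨a, ha⟩ : (toPMapOn D B).closure.domain) : H) = A ξ := haval
        rw [inner_add_left, inner_smul_left, pair2 D hD B Bd hB η ⟨a, ha⟩, hco]
        have := hCR ξ η
        push_cast
        simp only [map_mul, hcreal, map_one]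
        linear_combination -this)
      exact iterMem_succ (iterMem_zero _ _) hv hval
    · -- inductive step
      obtain ⟨k', rfl⟩ : ∃ k', k = k' + 1 := ⟨k - 1, by omega⟩
      obtain ⟨b', hb'mem, hIb', hb'val⟩ := iterMem_succ_elim hIb1
      -- b is in the domain of ℬ
      obtain ⟨a0, hIa0, ha0⟩ := hdom ξ (k' + 1) (by omega) (by omega)
      have ha0b : a0 = b := iterMem_unique hIa0 hIb1
      subst ha0b
      have IH := ih (by omega) (by omega) ξ a0 b' hIb1 (by simpa using hIb') ha0
      -- extend the chain one more step
      obtain ⟨hv, hval⟩ := mk_mem D hD A Ad hA E1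
        ((toPMapOn D B).closure ⟨a0, ha0⟩ + (c * (k' + 1 : ℕ)) • b')
        ((toPMapOn D B).closure ⟨a, ha⟩ + (c * (k' + 1 + 1 : ℕ)) • a0) (by
        intro η
        have hstar := star_comm D hD A Ad B Bd c hA hB hCR hint a0 hb1mem ha0 η
        have hp2b : ⟪(toPMapOn D B).closure ⟨a, ha⟩, (η : H)⟫ = ⟪a, Bd η⟫ :=
          pair2 D hD B Bd hB η ⟨a, ha⟩
        have hp2a : ⟪(toPMapOn D A).closure ⟨a0, hb1mem⟩, (η : H)⟫ = ⟪a0, Ad η⟫ :=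
          pair2 D hD A Ad hA η ⟨a0, hb1mem⟩
        have hb'pair : ⟪b', Ad η⟫ = ⟪a0, (η : H)⟫ := by
          calc ⟪b', Ad η⟫ = conj ⟪Ad η, b'⟫ := (inner_conj_symm _ _).symm
            _ = conj ⟪(η : H), (toPMapOn D A).closure ⟨b', hb'mem⟩⟫ := by
                rw [pair1 D hD A Ad hA η ⟨b', hb'mem⟩]
            _ = conj ⟪(η : H), a0⟫ := by rw [hb'val]
            _ = ⟪a0, (η : H)⟫ := inner_conj_symm _ _
        have hAa0 : (toPMapOn D A).closure ⟨a0, hb1mem⟩ = a := hb1val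
        rw [inner_add_left, inner_add_left, inner_smul_left, inner_smul_left,
          hp2b, hb'pair]
        rw [hAa0] at hstar
        simp only [map_mul, hcreal, map_natCast]
        push_cast
        linear_combination -hstar)
      exact iterMem_succ IH hv hval
end key


end St17
end

/- STATEMENT 17: Let S,T ∈ L†(D,H) satisfy [S,T] = 1_D weakly, with S* = closure(S†) and
T* = closure(T†). If for every ξ ∈ D and 1 ≤ k ≤ n one has ξ ∈ D(S̄^k) ∩ D((S*)^k),
S̄^k ξ ∈ D(T̄), (S*)^k ξ ∈ D(T*), then for every ξ ∈ D and 1 ≤ k ≤ n: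
Tξ ∈ D(S̄^k) with S̄^k Tξ = T̄ S̄^k ξ + k S̄^{k−1} ξ, and
T†ξ ∈ D((S*)^k) with (S*)^k T†ξ = T*(S*)^k ξ − k (S*)^{k−1} ξ. -/
theorem power_commutation_relations
    {H : Type*} [NormedAddCommGroup H] [InnerProductSpace ℂ H] [CompleteSpace H]
    (D : Submodule ℂ H) (hD : Dense (D : Set H))
    (S Sd T Td : D →ₗ[ℂ] H)
    (hS : ∀ ξ η : D, (inner ℂ (S ξ) (η : H) : ℂ) = inner ℂ (ξ : H) (Sd η))
    (hT : ∀ ξ η : D, (inner ℂ (T ξ) (η : H) : ℂ) = inner ℂ (ξ : H) (Td η))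
    (hCR : ∀ ξ η : D,
      (inner ℂ (T ξ) (Sd η) : ℂ) - (inner ℂ (S ξ) (Td η) : ℂ) = (inner ℂ (ξ : H) (η : H) : ℂ))
    -- S* = closure(S†) and T* = closure(T†)
    (hSadj : (LinearMap.toPMapOn D S).adjoint = (LinearMap.toPMapOn D Sd).closure)
    (hTadj : (LinearMap.toPMapOn D T).adjoint = (LinearMap.toPMapOn D Td).closure)
    (n : ℕ) (hn : 1 ≤ n)
    -- domain hypotheses: for every ξ ∈ D and 1 ≤ k ≤ n,
    -- ξ ∈ D(S̄^k) ∩ D((S*)^k), S̄^k ξ ∈ D(T̄) and (S*)^k ξ ∈ D(T*)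
    (hdom : ∀ ξ : D, ∀ k : ℕ, 1 ≤ k → k ≤ n →
      (∃ a : H, IterMem (LinearMap.toPMapOn D S).closure k (ξ : H) a ∧
        a ∈ (LinearMap.toPMapOn D T).closure.domain) ∧
      (∃ a' : H, IterMem (LinearMap.toPMapOn D S).adjoint k (ξ : H) a' ∧
        a' ∈ (LinearMap.toPMapOn D T).adjoint.domain)) :
    ∀ ξ : D, ∀ k : ℕ, 1 ≤ k → k ≤ n →
      -- Tξ ∈ D(S̄^k) with S̄^k Tξ = T̄ S̄^k ξ + k S̄^{k−1} ξ
      (∀ a b : H, IterMem (LinearMap.toPMapOn D S).closure k (ξ : H) a →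
        IterMem (LinearMap.toPMapOn D S).closure (k - 1) (ξ : H) b →
        ∀ ha : a ∈ (LinearMap.toPMapOn D T).closure.domain,
          IterMem (LinearMap.toPMapOn D S).closure k (T ξ)
            ((LinearMap.toPMapOn D T).closure ⟨a, ha⟩ + (k : ℂ) • b)) ∧
      -- T†ξ ∈ D((S*)^k) with (S*)^k T†ξ = T*(S*)^k ξ − k (S*)^{k−1} ξ
      (∀ a b : H, IterMem (LinearMap.toPMapOn D S).adjoint k (ξ : H) a →
        IterMem (LinearMap.toPMapOn D S).adjoint (k - 1) (ξ : H) b →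
        ∀ ha : a ∈ (LinearMap.toPMapOn D T).adjoint.domain,
          IterMem (LinearMap.toPMapOn D S).adjoint k (Td ξ)
            ((LinearMap.toPMapOn D T).adjoint ⟨a, ha⟩ - (k : ℂ) • b)) := by
  letI Sp := LinearMap.toPMapOn D S
  letI Sdp := LinearMap.toPMapOn D Sd
  letI Tp := LinearMap.toPMapOn D T
  letI Tdp := LinearMap.toPMapOn D Td
  -- basic facts
  have hS' : ∀ ξ η : D, (inner ℂ (Sd ξ) (η : H) : ℂ) = inner ℂ (ξ : H) (S η) :=
    fun ξ η => St17.fa2 D S Sd hS ξ η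
  have hT' : ∀ ξ η : D, (inner ℂ (Td ξ) (η : H) : ℂ) = inner ℂ (ξ : H) (T η) :=
    fun ξ η => St17.fa2 D T Td hT ξ η
  have hClS : Sp.IsClosable := St17.cl1 D hD S Sd hS
  have hClSd : Sdp.IsClosable := St17.cl1 D hD Sd S hS'
  have hClT : Tp.IsClosable := St17.cl1 D hD T Td hT
  have hClTd : Tdp.IsClosable := St17.cl1 D hD Td T hT'
  have hDSadj : Dense ((Sp.adjoint).domain : Set H) :=
    hD.mono (St17.fd_le D hD S Sd hS).1
  -- E1 for the first half : Sd'† ≤ S-bar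
  have E1S : Sdp.adjoint ≤ Sp.closure := by
    have h1 : Sdp.adjoint ≤ Sdp.closure.adjoint :=
      St17.adjoint_le_closure_adjoint Sdp hD hClSd
    rw [← hSadj] at h1
    exact h1.trans (St17.adjoint_adjoint_le_closure Sp hD hDSadj hClS)
  -- E1 for the second half
  have E1Sd : Sp.adjoint ≤ Sdp.closure := le_of_eq hSadj
  -- T-bar ≤ Td'†
  have hTleTd : Tp.closure ≤ Tdp.adjoint :=
    St17.closure_le_of_isClosed ((St17.fa2 D T Td hT).le_adjoint hD)
      (St17.adjoint_isClosed Tdp hD)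
  -- interlock conditions
  have hint1 : ∀ η : D, Sd η ∈ Tp.adjoint.domain := by
    intro η
    obtain ⟨a', hIa', ha'⟩ := (hdom η 1 le_rfl hn).2
    obtain ⟨b0, hb0, hI0, hval⟩ := St17.iterMem_succ_elim hIa'
    have hb0e : b0 = (η : H) := St17.iterMem_zero_eq hI0
    subst hb0e
    have : Sp.adjoint ⟨(η : H), hb0⟩ = Sd η :=
      St17.le_apply (St17.fd_le D hD S Sd hS) η hb0
    rw [← this, hval]
    exact ha'
  have hint2 : ∀ η : D, S η ∈ Tdp.adjoint.domain := by
    intro η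
    obtain ⟨a, hIa, haT⟩ := (hdom η 1 le_rfl hn).1
    obtain ⟨b0, hb0, hI0, hval⟩ := St17.iterMem_succ_elim hIa
    have hb0e : b0 = (η : H) := St17.iterMem_zero_eq hI0
    subst hb0e
    have heq : Sp.closure ⟨(η : H), hb0⟩ = S η := by
      rw [St17.le_apply Sp.le_closure η hb0]
      rfl
    rw [← hval, heq] at haT
    exact hTleTd.1 haT
  -- commutation relations with constants
  have hCR1 : ∀ ξ η : D, (inner ℂ (T ξ) (Sd η) : ℂ) - inner ℂ (S ξ) (Td η)
      = (1 : ℂ) * inner ℂ (ξ : H) (η : H) := by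
    intro ξ η; rw [one_mul]; exact hCR ξ η
  have hCR2 : ∀ ξ η : D, (inner ℂ (Td ξ) (S η) : ℂ) - inner ℂ (Sd ξ) (T η)
      = (-1 : ℂ) * inner ℂ (ξ : H) (η : H) := by
    intro ξ η
    have h0 := congrArg (starRingEnd ℂ) (hCR η ξ)
    simp only [_root_.map_sub, inner_conj_symm] at h0
    linear_combination -h0
  intro ξ k hk1 hkn
  constructor
  · -- first half
    intro a b hIa hIb ha
    have := St17.key D hD S Sd T Td 1 hS hT hCR1 hint1 (by simp) E1S n
      (fun ξ k h1 h2 => (hdom ξ k h1 h2).1) k hk1 hkn ξ a b hIa hIb ha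
    simpa [one_mul] using this
  · -- second half
    intro a b hIa hIb
    rw [hSadj] at hIa hIb
    rw [hSadj, hTadj]
    intro ha
    have := St17.key D hD Sd S Td T (-1) hS' hT' hCR2 hint2 (by simp) E1Sd n
      (fun ξ k h1 h2 => by
        obtain ⟨a', h', hm'⟩ := (hdom ξ k h1 h2).2
        rw [hSadj] at h'
        rw [hTadj] at hm'
        exact ⟨a', h', hm'⟩) k hk1 hkn ξ a b hIa hIb ha
    have hco : ((-1 : ℂ) * (k : ℂ)) • b = -((k : ℂ) • b) := by
      rw [neg_one_mul, neg_smul]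
    rw [hco, ← sub_eq_add_neg] at this
    exact this
end
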